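/- arXiv:1502.06896 — 3 statements merged into one kernel-verified Lean document; each statement's English description precedes it below -/
import Mathlib

section
/- Let v be a balancing vertex of a biased graph Ω. Define a relation ∼ on the links incident to v by e ∼ f iff e = f or some balanced cycle contains both e and f. Then ∼ is an equivalence relation, and a cycle of Ω through v is balanced if and only if its two edges at v lie in the same equivalence class. -/
open Set

/-! ### Matroid core -/

namespace Matroid

variable {α : Type*}

/-- A circuit: a minimal dependent set. -/
def Circuit' (M : Matroid α) (C : Set α) : Prop :=
  M.Dep C ∧ ∀ D, D ⊂ C → M.Indep D

/-- A matroid is connected if its ground set is nonempty and every two distinct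
elements lie in a common circuit. -/
def Connected' (M : Matroid α) : Prop :=
  M.E.Nonempty ∧ ∀ e ∈ M.E, ∀ f ∈ M.E, e ≠ f → ∃ C, M.Circuit' C ∧ e ∈ C ∧ f ∈ C

/-- Deletion of a set of elements. -/
def del (M : Matroid α) (D : Set α) : Matroid α := M ↾ (M.E \ D)

/-- Contraction of a set of elements. -/
def con (M : Matroid α) (C : Set α) : Matroid α := (M✶.del C)✶

/-- `N` is a minor of `M`. -/
def IsMinor' (N M : Matroid α) : Prop :=
  ∃ C D : Set α, Disjoint C D ∧ C ⊆ M.E ∧ D ⊆ M.E ∧ N = (M.con C).del D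

def IsStrictMinor' (N M : Matroid α) : Prop := N.IsMinor' M ∧ N ≠ M

/-- The rank (as an extended natural number) of a set in a matroid. -/
noncomputable def eRk' (M : Matroid α) (X : Set α) : ℕ∞ :=
  ⨆ I : {I : Set α // M.Indep I ∧ I ⊆ X}, I.1.encard

/-- A cocircuit is a circuit of the dual matroid. -/
def Cocircuit' (M : Matroid α) (K : Set α) : Prop := M✶.Circuit' K

/-- A loop is a one-element circuit. -/
def IsLoopElem (M : Matroid α) (e : α) : Prop := M.Circuit' {e}

end Matroid

/-! ### Biased graph core -/

universe u v

/-- A multigraph, given by assigning two (possibly equal) endpoints to each edge. -/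
structure MultiGraph (V : Type u) (E : Type v) where
  fst : E → V
  snd : E → V

namespace MultiGraph

variable {V : Type u} {E : Type v} (G : MultiGraph V E)

/-- Vertex `v` is incident with edge `e`. -/
def Inc (v : V) (e : E) : Prop := G.fst e = v ∨ G.snd e = v

/-- `e` is a loop. -/
def IsLoopEdge (e : E) : Prop := G.fst e = G.snd e

/-- `e` is a link (an edge with two distinct endpoints). -/
def IsLink (e : E) : Prop := G.fst e ≠ G.snd e

/-- The set of vertices incident with an edge in `X`. -/
def VSet (X : Set E) : Set V := {v | ∃ e ∈ X, G.Inc v e}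

/-- The degree of `v` in the edge set `X` (loops count twice). -/
noncomputable def deg (X : Set E) (v : V) : ℕ :=
  {e | e ∈ X ∧ G.fst e = v}.ncard + {e | e ∈ X ∧ G.snd e = v}.ncard

/-- Two edges of `X` are adjacent if they share a vertex. -/
def EdgeAdj (X : Set E) (e f : E) : Prop := e ∈ X ∧ f ∈ X ∧ ∃ v, G.Inc v e ∧ G.Inc v f

/-- The subgraph induced by the edge set `X` is connected. -/
def ConnectedOn (X : Set E) : Prop :=
  ∀ ⦃e f⦄, e ∈ X → f ∈ X → Relation.ReflTransGen (G.EdgeAdj X) e f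

/-- An edge set is a cycle if it is finite, nonempty, connected and every
incident vertex has degree exactly two. -/
def IsCycle (C : Set E) : Prop :=
  C.Finite ∧ C.Nonempty ∧ G.ConnectedOn C ∧ ∀ v ∈ G.VSet C, G.deg C v = 2

/-- The ends of an edge set: its vertices of degree one. -/
def Ends (P : Set E) : Set V := {v | v ∈ G.VSet P ∧ G.deg P v = 1}

/-- An edge set is a path if it is finite, nonempty, connected, has maximum degree
two and exactly two vertices of degree one. -/
def IsPath (P : Set E) : Prop :=
  P.Finite ∧ P.Nonempty ∧ G.ConnectedOn P ∧ (∀ v ∈ G.VSet P, G.deg P v ≤ 2) ∧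
    (G.Ends P).ncard = 2

/-- `C` is (the edge set of) a connected component of the subgraph induced by `X`. -/
def IsComponentOf (C X : Set E) : Prop :=
  ∃ e ∈ X, C = {f | f ∈ X ∧ Relation.ReflTransGen (G.EdgeAdj X) e f}

end MultiGraph

/-- A biased graph: a multigraph with a distinguished collection of "balanced" edge sets. -/
structure BiasedGraph (V : Type u) (E : Type v) extends MultiGraph V E where
  Balanced : Set (Set E)

namespace BiasedGraph

variable {V : Type u} {E : Type v} (Ω : BiasedGraph V E)

/-- The theta property: every balanced set is a cycle, and no theta subgraph
(a union of two cycles whose symmetric difference is a cycle) contains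
exactly two balanced cycles. -/
def ThetaProperty : Prop :=
  (∀ C ∈ Ω.Balanced, Ω.toMultiGraph.IsCycle C) ∧
  ∀ C₁ C₂ C₃ : Set E, Ω.toMultiGraph.IsCycle C₁ → Ω.toMultiGraph.IsCycle C₂ →
    Ω.toMultiGraph.IsCycle C₃ → C₃ = symmDiff C₁ C₂ →
    C₁ ∈ Ω.Balanced → C₂ ∈ Ω.Balanced → C₃ ∈ Ω.Balanced

def IsBalancedCycle (C : Set E) : Prop := Ω.toMultiGraph.IsCycle C ∧ C ∈ Ω.Balanced

def IsUnbalancedCycle (C : Set E) : Prop := Ω.toMultiGraph.IsCycle C ∧ C ∉ Ω.Balanced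

/-- The subgraph induced by `X` is balanced: every cycle inside it is balanced. -/
def BalancedOn (X : Set E) : Prop :=
  ∀ C ⊆ X, Ω.toMultiGraph.IsCycle C → C ∈ Ω.Balanced

/-- A contrabalanced theta subgraph: all three of its cycles are unbalanced. -/
def IsContraTheta (T : Set E) : Prop :=
  ∃ C₁ C₂ C₃ : Set E, Ω.IsUnbalancedCycle C₁ ∧ Ω.IsUnbalancedCycle C₂ ∧
    Ω.IsUnbalancedCycle C₃ ∧ C₃ = symmDiff C₁ C₂ ∧ T = C₁ ∪ C₂

/-- Tight handcuffs: two edge-disjoint unbalanced cycles meeting in exactly one vertex. -/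
def IsTightHandcuff (H : Set E) : Prop :=
  ∃ C₁ C₂ : Set E, Ω.IsUnbalancedCycle C₁ ∧ Ω.IsUnbalancedCycle C₂ ∧ Disjoint C₁ C₂ ∧
    (∃ v, Ω.toMultiGraph.VSet C₁ ∩ Ω.toMultiGraph.VSet C₂ = {v}) ∧ H = C₁ ∪ C₂

/-- Loose handcuffs: two vertex-disjoint unbalanced cycles joined by a path meeting
them only in its two ends. -/
def IsLooseHandcuff (H : Set E) : Prop :=
  ∃ C₁ C₂ P : Set E, Ω.IsUnbalancedCycle C₁ ∧ Ω.IsUnbalancedCycle C₂ ∧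
    Disjoint (Ω.toMultiGraph.VSet C₁) (Ω.toMultiGraph.VSet C₂) ∧
    Ω.toMultiGraph.IsPath P ∧ Disjoint P (C₁ ∪ C₂) ∧
    (∃ a b, a ≠ b ∧ Ω.toMultiGraph.Ends P = {a, b} ∧
      Ω.toMultiGraph.VSet P ∩ Ω.toMultiGraph.VSet C₁ = {a} ∧
      Ω.toMultiGraph.VSet P ∩ Ω.toMultiGraph.VSet C₂ = {b}) ∧
    H = C₁ ∪ C₂ ∪ P

/-- The circuits of the frame matroid of a biased graph. -/
def FrameCircuit (X : Set E) : Prop :=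
  Ω.IsBalancedCycle X ∨ Ω.IsContraTheta X ∨ Ω.IsTightHandcuff X ∨ Ω.IsLooseHandcuff X

end BiasedGraph

/-- A biased graph (on the ground set of `M`) represents the matroid `M`:
it satisfies the theta property and the circuits of `M` are exactly its frame circuits. -/
def BiasedGraph.Represents {V : Type u} {α : Type v} (M : Matroid α)
    (Ω : BiasedGraph V ↥M.E) : Prop :=
  Ω.ThetaProperty ∧ ∀ X : Set ↥M.E, M.Circuit' (Subtype.val '' X) ↔ Ω.FrameCircuit X

/-- A matroid is frame if some biased graph represents it. -/
def Matroid.IsFrame {α : Type v} (M : Matroid α) : Prop :=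
  ∃ (V : Type v) (Ω : BiasedGraph V ↥M.E), BiasedGraph.Represents M Ω

/-- A matroidal `(M, L)` is frame if some biased graph representing `M` has all
elements of `L` as unbalanced loops. -/
def Matroid.IsFrameMatroidal {α : Type v} (M : Matroid α) (L : Set α) : Prop :=
  ∃ (V : Type v) (Ω : BiasedGraph V ↥M.E), BiasedGraph.Represents M Ω ∧
    ∀ e : ↥M.E, e.1 ∈ L → Ω.toMultiGraph.IsLoopEdge e ∧ {e} ∉ Ω.Balanced

/-! ### Auxiliary walk machinery -/

section AuxWalks

open Classical List

namespace MultiGraph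

variable {V : Type u} {E : Type v} (G : MultiGraph V E)

/-- A walk from a vertex, as a list of steps (edge, next vertex). -/
def IsWalk : V → List (E × V) → Prop
  | _, [] => True
  | u, st :: L => ((G.fst st.1 = u ∧ G.snd st.1 = st.2) ∨ (G.fst st.1 = st.2 ∧ G.snd st.1 = u))
      ∧ IsWalk st.2 L

/-- The final vertex of a walk. -/
def wEnd : V → List (E × V) → V
  | u, [] => u
  | _, st :: L => wEnd st.2 L

/-- Edge set of a walk. -/
def eset (L : List (E × V)) : Set E := {a | a ∈ L.map Prod.fst}

variable {G}

@[simp] lemma isWalk_nil (u : V) : G.IsWalk u [] := trivial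

lemma isWalk_cons {u : V} {st : E × V} {L : List (E × V)} :
    G.IsWalk u (st :: L) ↔
      (((G.fst st.1 = u ∧ G.snd st.1 = st.2) ∨ (G.fst st.1 = st.2 ∧ G.snd st.1 = u))
        ∧ G.IsWalk st.2 L) := by
  simp [IsWalk]

@[simp] lemma wEnd_nil (u : V) : wEnd (E := E) u [] = u := rfl
@[simp] lemma wEnd_cons (u : V) (st : E × V) (L : List (E × V)) :
    wEnd u (st :: L) = wEnd st.2 L := rfl

lemma wEnd_append (u : V) (L₁ L₂ : List (E × V)) :
    wEnd u (L₁ ++ L₂) = wEnd (wEnd u L₁) L₂ := by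
  induction L₁ generalizing u with
  | nil => simp
  | cons st L ih => simp [wEnd, ih]

lemma isWalk_append {u : V} {L₁ L₂ : List (E × V)} :
    G.IsWalk u (L₁ ++ L₂) ↔ G.IsWalk u L₁ ∧ G.IsWalk (wEnd u L₁) L₂ := by
  induction L₁ generalizing u with
  | nil => simp
  | cons st L ih => simp [isWalk_cons, ih, and_assoc]

lemma wEnd_mem_verts {u : V} {L : List (E × V)} (h : L ≠ []) :
    wEnd u L ∈ L.map Prod.snd := by
  induction L generalizing u with
  | nil => simp at h
  | cons st L ih =>
    rcases eq_or_ne L [] with rfl | hL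
    · simp [wEnd]
    · simpa using Or.inr (ih hL)

lemma inc_walk_fst {u : V} {st : E × V} {L : List (E × V)} (h : G.IsWalk u (st :: L)) :
    G.Inc u st.1 ∧ G.Inc st.2 st.1 := by
  rw [isWalk_cons] at h
  rcases h.1 with ⟨h1, h2⟩ | ⟨h1, h2⟩ <;> constructor <;> simp [Inc, h1, h2]

lemma eset_finite (L : List (E × V)) : (eset (V := V) (E := E) L).Finite :=
  (L.map Prod.fst).finite_toSet

@[simp] lemma mem_eset {a : E} {L : List (E × V)} : a ∈ eset (V := V) L ↔ a ∈ L.map Prod.fst :=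
  Iff.rfl

lemma eset_cons (st : E × V) (L : List (E × V)) :
    eset (st :: L) = insert st.1 (eset (V := V) L) := by
  ext a; simp [eset]

end MultiGraph

end AuxWalks
section AuxWalks2

open Classical List

namespace MultiGraph

variable {V : Type u} {E : Type v} {G : MultiGraph V E}

/-- Count occurrences of a vertex in a list (classical). -/
noncomputable def vcnt (w : V) : List V → ℕ
  | [] => 0
  | x :: l => (if x = w then 1 else 0) + vcnt w l

@[simp] lemma vcnt_nil (w : V) : vcnt w [] = 0 := rfl
@[simp] lemma vcnt_cons (w x : V) (l : List V) :
    vcnt w (x :: l) = (if x = w then 1 else 0) + vcnt w l := rfl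

lemma vcnt_append (w : V) (l₁ l₂ : List V) :
    vcnt w (l₁ ++ l₂) = vcnt w l₁ + vcnt w l₂ := by
  induction l₁ with
  | nil => simp
  | cons x l ih => simp [ih]; ring

lemma vcnt_eq_zero {w : V} {l : List V} (h : w ∉ l) : vcnt w l = 0 := by
  induction l with
  | nil => simp
  | cons x l ih =>
    simp only [mem_cons, not_or] at h
    simp [Ne.symm h.1, ih h.2]

lemma vcnt_eq_one {w : V} {l : List V} (hl : l.Nodup) (h : w ∈ l) : vcnt w l = 1 := by
  induction l with
  | nil => simp at h
  | cons x l ih =>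
    rcases mem_cons.mp h with rfl | h'
    · simp [vcnt_eq_zero (nodup_cons.mp hl).1]
    · have hx : x ≠ w := by rintro rfl; exact (nodup_cons.mp hl).1 h'
      simp [hx, ih (nodup_cons.mp hl).2 h']

lemma ncard_sep_insert {S : Set E} (hS : S.Finite) {a : E} (ha : a ∉ S) (P : E → Prop) :
    {e | e ∈ insert a S ∧ P e}.ncard = (if P a then 1 else 0) + {e | e ∈ S ∧ P e}.ncard := by
  by_cases hP : P a
  · have : {e | e ∈ insert a S ∧ P e} = insert a {e | e ∈ S ∧ P e} := by
      ext x; simp only [Set.mem_insert_iff, Set.mem_setOf_eq]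
      constructor
      · rintro ⟨rfl | hx, hpx⟩
        · exact Or.inl rfl
        · exact Or.inr ⟨hx, hpx⟩
      · rintro (rfl | ⟨hx, hpx⟩)
        · exact ⟨Or.inl rfl, hP⟩
        · exact ⟨Or.inr hx, hpx⟩
    rw [this, Set.ncard_insert_of_notMem (fun h => ha h.1)
      (hS.subset (fun x hx => hx.1)), if_pos hP]
    omega
  · have : {e | e ∈ insert a S ∧ P e} = {e | e ∈ S ∧ P e} := by
      ext x; simp only [Set.mem_insert_iff, Set.mem_setOf_eq]
      constructor
      · rintro ⟨rfl | hx, hpx⟩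
        · exact absurd hpx hP
        · exact ⟨hx, hpx⟩
      · rintro ⟨hx, hpx⟩; exact ⟨Or.inr hx, hpx⟩
    rw [this, if_neg hP]; omega

lemma deg_singleton (e : E) (w : V) :
    G.deg {e} w = (if G.fst e = w then 1 else 0) + (if G.snd e = w then 1 else 0) := by
  unfold deg
  have h1 : {x | x ∈ ({e} : Set E) ∧ G.fst x = w} =
      if G.fst e = w then {e} else ∅ := by
    by_cases h : G.fst e = w <;> ext x <;> simp_all (config := {contextual := true})
      <;> rintro rfl <;> simp_all
  have h2 : {x | x ∈ ({e} : Set E) ∧ G.snd x = w} =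
      if G.snd e = w then {e} else ∅ := by
    by_cases h : G.snd e = w <;> ext x <;> simp_all (config := {contextual := true})
      <;> rintro rfl <;> simp_all
  rw [h1, h2]
  by_cases h : G.fst e = w <;> by_cases h' : G.snd e = w <;> simp [h, h']

lemma step_count {u w : V} {st : E × V} {L : List (E × V)} (h : G.IsWalk u (st :: L)) :
    ((if G.fst st.1 = w then 1 else 0) + (if G.snd st.1 = w then 1 else 0) : ℕ)
      = (if u = w then 1 else 0) + (if st.2 = w then 1 else 0) := by
  rw [isWalk_cons] at h
  rcases h.1 with ⟨h1, h2⟩ | ⟨h1, h2⟩ <;> rw [h1, h2] <;> ring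

lemma deg_insert {S : Set E} (hS : S.Finite) {a : E} (ha : a ∉ S) (w : V) :
    G.deg (insert a S) w = G.deg {a} w + G.deg S w := by
  rw [deg_singleton]
  unfold deg
  rw [ncard_sep_insert hS ha (fun e => G.fst e = w),
    ncard_sep_insert hS ha (fun e => G.snd e = w)]
  by_cases h : G.fst a = w <;> by_cases h' : G.snd a = w <;> simp [h, h'] <;> omega

/-- Degree of the edge set of a walk, counted via the vertex lists. -/
lemma deg_eset_walk {u : V} {L : List (E × V)} (h : G.IsWalk u L)
    (hnd : (L.map Prod.fst).Nodup) (w : V) :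
    G.deg (eset L) w = vcnt w ((u :: L.map Prod.snd).dropLast) + vcnt w (L.map Prod.snd) := by
  induction L generalizing u with
  | nil =>
    simp only [map_nil, dropLast_singleton, vcnt_nil]
    have : eset (V := V) (E := E) [] = ∅ := by ext x; simp [eset]
    rw [this]; unfold deg
    simp
  | cons st L ih =>
    rw [isWalk_cons] at h
    rw [map_cons, nodup_cons] at hnd
    have hnd' : (L.map Prod.fst).Nodup := hnd.2
    have hst : st.1 ∉ eset L := by simpa [eset] using hnd.1
    rw [eset_cons, deg_insert (eset_finite L) hst w, ih h.2 hnd']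
    have hstep := step_count (w := w) (G := G) (u := u) (by rw [isWalk_cons]; exact h)
    have hd : ((u :: (st :: L).map Prod.snd).dropLast) =
        u :: ((st.2 :: L.map Prod.snd).dropLast) := by
      simp
    rw [deg_singleton, hd]
    simp only [map_cons, vcnt_cons]
    have : vcnt w (st.2 :: L.map Prod.snd) = (if st.2 = w then 1 else 0) +
      vcnt w (L.map Prod.snd) := rfl
    omega

end MultiGraph

end AuxWalks2
section AuxWalks3

open Classical List

namespace MultiGraph

variable {V : Type u} {E : Type v} {G : MultiGraph V E}

lemma endpoints_mem_verts {u : V} {L : List (E × V)} (h : G.IsWalk u L) {st : E × V}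
    (hst : st ∈ L) : G.fst st.1 ∈ u :: L.map Prod.snd ∧ G.snd st.1 ∈ u :: L.map Prod.snd := by
  induction L generalizing u with
  | nil => simp at hst
  | cons st' L ih =>
    rw [isWalk_cons] at h
    rcases mem_cons.mp hst with rfl | hst'
    · rcases h.1 with ⟨h1, h2⟩ | ⟨h1, h2⟩ <;> rw [h1, h2] <;> simp
    · have := ih h.2 hst'
      simp only [map_cons, mem_cons] at this ⊢
      tauto

lemma VSet_eset {u : V} {L : List (E × V)} (h : G.IsWalk u L) (hL : L ≠ []) :
    G.VSet (eset L) = {x | x ∈ u :: L.map Prod.snd} := by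
  ext x
  simp only [VSet, Set.mem_setOf_eq]
  constructor
  · rintro ⟨e, he, hinc⟩
    simp only [mem_eset, mem_map] at he
    obtain ⟨st, hst, rfl⟩ := he
    have := endpoints_mem_verts h hst
    rcases hinc with h' | h' <;> rw [← h'] <;> tauto
  · intro hx
    rcases mem_cons.mp hx with rfl | hx'
    · obtain ⟨st, L', rfl⟩ : ∃ st L', L = st :: L' := by
        cases L with
        | nil => exact absurd rfl hL
        | cons a b => exact ⟨a, b, rfl⟩
      exact ⟨st.1, by simp [eset], (inc_walk_fst h).1⟩
    · simp only [mem_map] at hx'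
      obtain ⟨st, hst, rfl⟩ := hx'
      refine ⟨st.1, by simp [eset]; exact ⟨st.2, hst⟩, ?_⟩
      obtain ⟨l₁, l₂, rfl⟩ := List.append_of_mem hst
      rw [isWalk_append, isWalk_cons] at h
      exact (inc_walk_fst (by rw [isWalk_cons]; exact h.2)).2

lemma edgeAdj_symm {S : Set E} : Symmetric (G.EdgeAdj S) := by
  rintro e f ⟨he, hf, x, hx1, hx2⟩; exact ⟨hf, he, x, hx2, hx1⟩

lemma walk_reaches {u : V} {st₀ : E × V} {L : List (E × V)} {S : Set E}
    (h : G.IsWalk u (st₀ :: L)) (hsub : eset (st₀ :: L) ⊆ S) :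
    ∀ st ∈ st₀ :: L, Relation.ReflTransGen (G.EdgeAdj S) st₀.1 st.1 := by
  induction L generalizing u st₀ with
  | nil => intro st hst; simp at hst; subst hst; exact Relation.ReflTransGen.refl
  | cons st₁ L ih =>
    intro st hst
    rcases mem_cons.mp hst with rfl | hst'
    · exact Relation.ReflTransGen.refl
    · rw [isWalk_cons] at h
      have hadj : G.EdgeAdj S st₀.1 st₁.1 := by
        refine ⟨hsub (by simp [eset]), hsub (by simp [eset]), st₀.2, ?_, ?_⟩
        · exact (inc_walk_fst (by rw [isWalk_cons]; exact h)).2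
        · exact (inc_walk_fst h.2).1
      have hsub' : eset (st₁ :: L) ⊆ S := by
        intro a ha; apply hsub
        simp only [mem_eset, map_cons, mem_cons] at ha ⊢
        tauto
      exact Relation.ReflTransGen.head hadj (ih h.2 hsub' st hst')

lemma walk_connectedOn {u : V} {L : List (E × V)} (h : G.IsWalk u L) :
    G.ConnectedOn (eset L) := by
  intro e f he hf
  cases L with
  | nil => simp [eset] at he
  | cons st₀ L' =>
    simp only [mem_eset, mem_map] at he hf
    obtain ⟨ste, hste, rfl⟩ := he
    obtain ⟨stf, hstf, rfl⟩ := hf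
    have h1 := walk_reaches h (le_refl _) ste hste
    have h2 := walk_reaches h (le_refl _) stf hstf
    exact Relation.ReflTransGen.trans
      (by haveI : Std.Symm (G.EdgeAdj (eset (st₀ :: L'))) := ⟨edgeAdj_symm⟩; exact Std.Symm.symm _ _ h1) h2

/-- A closed simple walk: nonempty, returns to start, distinct edges,
start plus interior vertices distinct. -/
def ClosedSW (G : MultiGraph V E) (u : V) (L : List (E × V)) : Prop :=
  G.IsWalk u L ∧ L ≠ [] ∧ wEnd u L = u ∧ (L.map Prod.fst).Nodup ∧
    (u :: (L.map Prod.snd).dropLast).Nodup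

/-- An open simple walk: nonempty, all vertices distinct, distinct edges. -/
def OpenSW (G : MultiGraph V E) (u : V) (L : List (E × V)) : Prop :=
  G.IsWalk u L ∧ L ≠ [] ∧ (u :: L.map Prod.snd).Nodup ∧ (L.map Prod.fst).Nodup

lemma map_snd_eq_dropLast {u : V} {L : List (E × V)} (hL : L ≠ []) :
    L.map Prod.snd = (L.map Prod.snd).dropLast ++ [wEnd u L] := by
  induction L generalizing u with
  | nil => simp at hL
  | cons st L ih =>
    rcases eq_or_ne L [] with rfl | hL'
    · simp
    · have hne : L.map Prod.snd ≠ [] := by simpa using hL'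
      simp only [map_cons, wEnd_cons]
      rw [dropLast_cons_of_ne_nil hne]
      rw [cons_append]
      congr 1
      exact ih hL'

lemma ClosedSW.deg_eq_two {u : V} {L : List (E × V)} (h : G.ClosedSW u L) {w : V}
    (hw : w ∈ G.VSet (eset L)) : G.deg (eset L) w = 2 := by
  obtain ⟨hwalk, hL, hend, hnde, hndv⟩ := h
  rw [VSet_eset hwalk hL] at hw
  rw [deg_eset_walk hwalk hnde]
  have hsplit : L.map Prod.snd = (L.map Prod.snd).dropLast ++ [u] := by
    rw [← hend]; exact map_snd_eq_dropLast hL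
  have hdl : (u :: L.map Prod.snd).dropLast = u :: (L.map Prod.snd).dropLast := by
    rw [dropLast_cons_of_ne_nil (by simpa using hL)]
  rw [hdl]
  rw [nodup_cons] at hndv
  simp only [Set.mem_setOf_eq, mem_cons] at hw
  by_cases hwu : w = u
  · subst hwu
    rw [vcnt_cons, if_pos rfl, vcnt_eq_zero hndv.1, hsplit, vcnt_append]
    rw [vcnt_eq_zero hndv.1]
    simp
  · have hw' : w ∈ L.map Prod.snd := by tauto
    have hwI : w ∈ (L.map Prod.snd).dropLast := by
      rw [hsplit] at hw'
      rcases mem_append.mp hw' with h' | h'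
      · exact h'
      · rw [List.mem_singleton] at h'; exact absurd h' hwu
    rw [vcnt_cons, if_neg (fun h => hwu h.symm), vcnt_eq_one hndv.2 hwI, hsplit, vcnt_append,
      vcnt_eq_one hndv.2 hwI, vcnt_cons, if_neg (fun h => hwu h.symm), vcnt_nil]

end MultiGraph

end AuxWalks3
section AuxWalks4

open Classical List

namespace MultiGraph

variable {V : Type u} {E : Type v} {G : MultiGraph V E}

/-- Edges of `X` incident with `w`. -/
def incSet (G : MultiGraph V E) (X : Set E) (w : V) : Set E := {e | e ∈ X ∧ G.Inc w e}

lemma deg_eq_ncard_add {X : Set E} (hX : X.Finite) (w : V) :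
    G.deg X w = (G.incSet X w).ncard + {e | e ∈ X ∧ G.fst e = w ∧ G.snd e = w}.ncard := by
  unfold deg
  have hA : {e | e ∈ X ∧ G.fst e = w}.Finite := hX.subset (fun x hx => hx.1)
  have hB : {e | e ∈ X ∧ G.snd e = w}.Finite := hX.subset (fun x hx => hx.1)
  have hu : {e | e ∈ X ∧ G.fst e = w} ∪ {e | e ∈ X ∧ G.snd e = w} = G.incSet X w := by
    ext x; simp only [Set.mem_union, Set.mem_setOf_eq, incSet, Inc]; tauto
  have hi : {e | e ∈ X ∧ G.fst e = w} ∩ {e | e ∈ X ∧ G.snd e = w}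
      = {e | e ∈ X ∧ G.fst e = w ∧ G.snd e = w} := by
    ext x; simp only [Set.mem_inter_iff, Set.mem_setOf_eq]; tauto
  have := Set.ncard_union_add_ncard_inter {e | e ∈ X ∧ G.fst e = w}
    {e | e ∈ X ∧ G.snd e = w} hA hB
  rw [hu, hi] at this
  omega

lemma incSet_finite {X : Set E} (hX : X.Finite) (w : V) : (G.incSet X w).Finite :=
  hX.subset (fun x hx => hx.1)

lemma ncard_incSet_le_deg {X : Set E} (hX : X.Finite) (w : V) :
    (G.incSet X w).ncard ≤ G.deg X w := by
  rw [deg_eq_ncard_add hX]; omega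

/-- In a cycle, there are no loops together with other edges. -/
lemma cycle_loop_unique {C : Set E} (hC : G.IsCycle C) {l : E} (hl : l ∈ C)
    (hloop : G.fst l = G.snd l) : C = {l} := by
  obtain ⟨hfin, hne, hconn, hdeg⟩ := hC
  by_contra hne'
  obtain ⟨f, hf, hfl⟩ : ∃ f ∈ C, f ≠ l := by
    by_contra h
    push_neg at h
    exact hne' (Set.eq_singleton_iff_unique_mem.mpr ⟨hl, h⟩)
  set w := G.snd l with hw
  have hwv : w ∈ G.VSet C := ⟨l, hl, Or.inr rfl⟩
  have hkey : ∀ g ∈ C, G.Inc w g → g = l → True := fun _ _ _ _ => trivial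
  -- every edge adjacent to l must be l, else degree at w exceeds 2
  have hADJ : ∀ g, G.EdgeAdj C g l → g = l := by
    rintro g ⟨hgC, hlC, x, hxg, hxl⟩
    by_contra hgl
    have hxw : x = w := by rcases hxl with h | h <;> simp [hw, ← h, hloop]
    subst hxw
    have h2 : G.deg C w = 2 := hdeg w hwv
    rw [deg_eq_ncard_add hfin] at h2
    have hgi : g ∈ G.incSet C w := ⟨hgC, hxg⟩
    have hli : l ∈ G.incSet C w := ⟨hlC, Or.inr rfl⟩
    have hsub : {g, l} ⊆ G.incSet C w := by
      rintro x (rfl | rfl) <;> assumption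
    have h3 : ({g, l} : Set E).ncard = 2 := Set.ncard_pair hgl
    have h4 : 2 ≤ (G.incSet C w).ncard := h3 ▸ Set.ncard_le_ncard hsub (incSet_finite hfin w)
    have h5 : l ∈ {e | e ∈ C ∧ G.fst e = w ∧ G.snd e = w} := ⟨hlC, by simp [hw, hloop]⟩
    have h6 : 0 < {e | e ∈ C ∧ G.fst e = w ∧ G.snd e = w}.ncard :=
      (Set.ncard_pos (hfin.subset (fun x hx => hx.1))).mpr ⟨l, h5⟩
    omega
  have hall : ∀ x, Relation.ReflTransGen (G.EdgeAdj C) x l → x = l := by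
    intro x hx
    induction hx using Relation.ReflTransGen.head_induction_on with
    | refl => rfl
    | head hadj _ ih => exact hADJ _ (ih ▸ hadj)
  exact hfl (hall f (hconn hf hl))

lemma cycle_no_loop {C : Set E} (hC : G.IsCycle C) {e f : E} (he : e ∈ C) (hf : f ∈ C)
    (hef : e ≠ f) : ∀ g ∈ C, G.IsLink g := by
  intro g hg
  by_contra hgl
  unfold IsLink at hgl
  push_neg at hgl
  have := cycle_loop_unique hC hg hgl
  subst this
  simp only [Set.mem_singleton_iff] at he hf
  exact hef (he.trans hf.symm)

/-- If a cycle contains two distinct links at `v`, those are its only edges at `v`. -/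
lemma cycle_incSet_pair {C : Set E} (hC : G.IsCycle C) {e f : E} (he : e ∈ C) (hf : f ∈ C)
    (hef : e ≠ f) (hle : G.IsLink e) (hlf : G.IsLink f) {x : V} (hxe : G.Inc x e)
    (hxf : G.Inc x f) : G.incSet C x = {e, f} := by
  have hxv : x ∈ G.VSet C := ⟨e, he, hxe⟩
  have h2 : G.deg C x = 2 := hC.2.2.2 x hxv
  rw [deg_eq_ncard_add hC.1] at h2
  have hsub : {e, f} ⊆ G.incSet C x := by rintro y (rfl | rfl) <;> exact ⟨by assumption, by assumption⟩
  have hcard2 : ({e, f} : Set E).ncard = 2 := Set.ncard_pair hef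
  have hle2 : 2 ≤ (G.incSet C x).ncard :=
    hcard2 ▸ Set.ncard_le_ncard hsub (incSet_finite hC.1 x)
  have heq : (G.incSet C x).ncard = 2 := le_antisymm (by omega) hle2
  exact (Set.eq_of_subset_of_ncard_le hsub (by omega) (incSet_finite hC.1 x)).symm

/-- A cycle contained in a cycle is the whole cycle. -/
lemma cycle_subset_eq {C D : Set E} (hC : G.IsCycle C) (hD : G.IsCycle D) (hsub : C ⊆ D) :
    C = D := by
  obtain ⟨hCfin, ⟨e₀, he₀⟩, hCconn, hCdeg⟩ := hC
  obtain ⟨hDfin, hDne, hDconn, hDdeg⟩ := hD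
  refine Set.Subset.antisymm hsub ?_
  -- closure under adjacency
  have hclosed : ∀ g h, g ∈ C → G.EdgeAdj D g h → h ∈ C := by
    rintro g h hgC ⟨hgD, hhD, x, hxg, hxh⟩
    have hxC : x ∈ G.VSet C := ⟨g, hgC, hxg⟩
    have hxD : x ∈ G.VSet D := ⟨g, hsub hgC, hxg⟩
    have hAsub : {e | e ∈ C ∧ G.fst e = x} ⊆ {e | e ∈ D ∧ G.fst e = x} :=
      fun y hy => ⟨hsub hy.1, hy.2⟩
    have hBsub : {e | e ∈ C ∧ G.snd e = x} ⊆ {e | e ∈ D ∧ G.snd e = x} :=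
      fun y hy => ⟨hsub hy.1, hy.2⟩
    have hdc := hCdeg x hxC
    have hdd := hDdeg x hxD
    unfold deg at hdc hdd
    have hAfin : {e | e ∈ D ∧ G.fst e = x}.Finite := hDfin.subset (fun y hy => hy.1)
    have hBfin : {e | e ∈ D ∧ G.snd e = x}.Finite := hDfin.subset (fun y hy => hy.1)
    have hA : {e | e ∈ C ∧ G.fst e = x} = {e | e ∈ D ∧ G.fst e = x} := by
      apply Set.eq_of_subset_of_ncard_le hAsub _ hAfin
      have := Set.ncard_le_ncard hBsub hBfin
      omega
    have hB : {e | e ∈ C ∧ G.snd e = x} = {e | e ∈ D ∧ G.snd e = x} := by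
      apply Set.eq_of_subset_of_ncard_le hBsub _ hBfin
      have := Set.ncard_le_ncard hAsub hAfin
      omega
    rcases hxh with h' | h'
    · have : h ∈ {e | e ∈ C ∧ G.fst e = x} := hA ▸ ⟨hhD, h'⟩
      exact this.1
    · have : h ∈ {e | e ∈ C ∧ G.snd e = x} := hB ▸ ⟨hhD, h'⟩
      exact this.1
  have hall : ∀ f, Relation.ReflTransGen (G.EdgeAdj D) e₀ f → f ∈ C := by
    intro f hreach
    induction hreach with
    | refl => exact he₀
    | tail _ hadj ih => exact hclosed _ _ ih hadj
  exact fun f hf => hall f (hDconn (hsub he₀) hf)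

end MultiGraph

end AuxWalks4
section AuxWalks5

open Classical List

namespace MultiGraph

variable {V : Type u} {E : Type v} {G : MultiGraph V E}

lemma eset_append (L₁ L₂ : List (E × V)) :
    eset (L₁ ++ L₂) = eset L₁ ∪ eset (V := V) L₂ := by
  ext a; simp [eset]

lemma eset_nonempty {L : List (E × V)} (hL : L ≠ []) : (eset (V := V) L).Nonempty := by
  cases L with
  | nil => exact absurd rfl hL
  | cons st L' => exact ⟨st.1, by simp [eset]⟩

lemma ClosedSW.isCycle {u : V} {L : List (E × V)} (h : G.ClosedSW u L) :
    G.IsCycle (eset L) :=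
  ⟨eset_finite L, eset_nonempty h.2.1, walk_connectedOn h.1, fun _ hw => h.deg_eq_two hw⟩

lemma OpenSW.deg_start {u : V} {L : List (E × V)} (h : G.OpenSW u L) :
    G.deg (eset L) u = 1 := by
  obtain ⟨hwalk, hL, hndv, hnde⟩ := h
  rw [deg_eset_walk hwalk hnde]
  rw [nodup_cons] at hndv
  rw [dropLast_cons_of_ne_nil (by simpa using hL), vcnt_cons, if_pos rfl,
    vcnt_eq_zero hndv.1, vcnt_eq_zero (fun hm => hndv.1 (dropLast_subset _ hm))]

/-- unique incident edge at a degree-one vertex -/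
lemma incSet_subsingleton_of_deg_le_one {X : Set E} (hX : X.Finite) {w : V}
    (hdeg : G.deg X w ≤ 1) {a b : E} (ha : a ∈ G.incSet X w) (hb : b ∈ G.incSet X w) :
    a = b := by
  have hle := ncard_incSet_le_deg (G := G) hX w
  have hfin := incSet_finite (G := G) hX w
  by_contra hab
  have hsub : {a, b} ⊆ G.incSet X w := by rintro x (rfl | rfl) <;> assumption
  have := Set.ncard_le_ncard hsub hfin
  rw [Set.ncard_pair hab] at this
  omega

/-- Reversal of a walk. -/
def wRev : V → List (E × V) → List (E × V)
  | _, [] => []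
  | u, st :: L => wRev st.2 L ++ [(st.1, u)]

@[simp] lemma wRev_nil (u : V) : wRev (E := E) u [] = [] := rfl

lemma wRev_map_fst (u : V) (L : List (E × V)) :
    (wRev u L).map Prod.fst = (L.map Prod.fst).reverse := by
  induction L generalizing u with
  | nil => simp
  | cons st L ih => simp [wRev, ih]

lemma wRev_map_snd (u : V) (L : List (E × V)) :
    (wRev u L).map Prod.snd = ((u :: L.map Prod.snd).dropLast).reverse := by
  induction L generalizing u with
  | nil => simp [wRev]
  | cons st L ih =>
    simp only [wRev, map_append, ih, map_cons]
    rw [dropLast_cons_of_ne_nil (by simp : (st.2 :: L.map Prod.snd) ≠ [])]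
    simp

lemma wRev_wEnd (u : V) (L : List (E × V)) :
    wEnd (wEnd u L) (wRev u L) = u := by
  induction L generalizing u with
  | nil => simp
  | cons st L ih =>
    show wEnd (wEnd st.2 L) (wRev st.2 L ++ [(st.1, u)]) = u
    rw [wEnd_append, ih]
    rfl

lemma wRev_isWalk {u : V} {L : List (E × V)} (h : G.IsWalk u L) :
    G.IsWalk (wEnd u L) (wRev u L) := by
  induction L generalizing u with
  | nil => simp [wRev]
  | cons st L ih =>
    rw [isWalk_cons] at h
    rw [wEnd_cons]
    show G.IsWalk _ (wRev st.2 L ++ [(st.1, u)])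
    rw [isWalk_append, wRev_wEnd]
    refine ⟨ih h.2, ?_⟩
    rw [isWalk_cons]
    rcases h.1 with ⟨h1, h2⟩ | ⟨h1, h2⟩
    · exact ⟨Or.inr ⟨h1, h2⟩, trivial⟩
    · exact ⟨Or.inl ⟨h1, h2⟩, trivial⟩

lemma wRev_eset (u : V) (L : List (E × V)) : eset (wRev u L) = eset L := by
  ext a; simp [eset, wRev_map_fst]

lemma OpenSW.rev {u : V} {L : List (E × V)} (h : G.OpenSW u L) :
    G.OpenSW (wEnd u L) (wRev u L) := by
  obtain ⟨hwalk, hL, hndv, hnde⟩ := h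
  have hne : wRev u L ≠ [] := by
    cases L with
    | nil => exact absurd rfl hL
    | cons a b => simp [wRev]
  refine ⟨wRev_isWalk hwalk, hne, ?_, by rw [wRev_map_fst]; exact List.nodup_reverse.mpr hnde⟩
  have hverts : wEnd u L :: (wRev u L).map Prod.snd = (u :: L.map Prod.snd).reverse := by
    rw [wRev_map_snd]
    have : u :: L.map Prod.snd = (u :: L.map Prod.snd).dropLast ++ [wEnd u L] := by
      have h1 : L.map Prod.snd = (L.map Prod.snd).dropLast ++ [wEnd u L] :=
        map_snd_eq_dropLast hL
      rw [dropLast_cons_of_ne_nil (by simpa using hL), cons_append, ← h1]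
    rw [this]
    simp
  rw [hverts]
  exact List.nodup_reverse.mpr hndv

/-- Joining two open simple walks with the same endpoints into a closed walk. -/
lemma join_closedSW {x y : V} {L₁ L₂ : List (E × V)} (h₁ : G.OpenSW x L₁)
    (h₂ : G.OpenSW y L₂) (he₁ : wEnd x L₁ = y) (he₂ : wEnd y L₂ = x) (hxy : x ≠ y)
    (hv : ∀ a, a ∈ x :: L₁.map Prod.snd → a ∈ y :: L₂.map Prod.snd → a = x ∨ a = y)
    (hedge : ∀ a, a ∈ eset L₁ → a ∉ eset (V := V) L₂) :
    G.ClosedSW x (L₁ ++ L₂) := by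
  obtain ⟨hw₁, hL₁, hndv₁, hnde₁⟩ := h₁
  obtain ⟨hw₂, hL₂, hndv₂, hnde₂⟩ := h₂
  refine ⟨?_, by simp [hL₁], ?_, ?_, ?_⟩
  · rw [isWalk_append, he₁]; exact ⟨hw₁, hw₂⟩
  · rw [wEnd_append, he₁, he₂]
  · rw [map_append]
    refine hnde₁.append hnde₂ ?_
    intro a ha₁ ha₂
    exact hedge a (by simpa [eset] using ha₁) (by simpa [eset] using ha₂)
  · have hsplit₂ : L₂.map Prod.snd = (L₂.map Prod.snd).dropLast ++ [x] := by
      rw [← he₂]; exact map_snd_eq_dropLast hL₂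
    rw [map_append, dropLast_append_of_ne_nil (by simpa using hL₂)]
    rw [nodup_cons] at hndv₁ hndv₂
    have hxd : x ∉ (L₂.map Prod.snd).dropLast := by
      intro hm
      have hnd := hndv₂.2
      rw [hsplit₂] at hnd
      exact (List.disjoint_of_nodup_append hnd) hm (by simp)
    rw [nodup_cons]
    constructor
    · intro hx
      rcases mem_append.mp hx with h' | h'
      · exact hndv₁.1 h'
      · exact hxd h'
    · refine hndv₁.2.append (hndv₂.2.sublist (dropLast_sublist _)) ?_
      intro a ha₁ ha₂
      have ha₂' : a ∈ L₂.map Prod.snd := (dropLast_sublist _).mem ha₂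
      rcases hv a (mem_cons_of_mem _ ha₁) (mem_cons_of_mem _ ha₂') with rfl | rfl
      · exact hndv₁.1 ha₁
      · exact hndv₂.1 ha₂'

end MultiGraph

end AuxWalks5
section AuxWalks6

open Classical List

namespace MultiGraph

variable {V : Type u} {E : Type v} {G : MultiGraph V E}

lemma length_le_ncard {l : List E} {C : Set E} (hnd : l.Nodup) (hsub : ∀ a ∈ l, a ∈ C)
    (hC : C.Finite) : l.length ≤ C.ncard := by
  classical
  have h1 : l.toFinset.card = l.length := List.toFinset_card_of_nodup hnd
  have h2 : l.toFinset ⊆ hC.toFinset := by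
    intro a ha
    rw [Set.Finite.mem_toFinset]
    exact hsub a (List.mem_toFinset.mp ha)
  have h3 : C.ncard = hC.toFinset.card := Set.ncard_eq_toFinset_card C hC
  have := Finset.card_le_card h2
  omega

lemma deg_eq_ncard_incSet {X : Set E} (hX : X.Finite) (hlf : ∀ g ∈ X, G.IsLink g) (w : V) :
    G.deg X w = (G.incSet X w).ncard := by
  rw [deg_eq_ncard_add hX]
  have : {e | e ∈ X ∧ G.fst e = w ∧ G.snd e = w} = ∅ := by
    ext g
    simp only [Set.mem_setOf_eq, Set.mem_empty_iff_false, iff_false, not_and]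
    intro hg h1 h2
    exact hlf g hg (h1.trans h2.symm)
  rw [this, Set.ncard_empty]
  omega

/-- Every cycle consisting of links admits a closed simple traversal from any
incident vertex, starting with any prescribed incident edge. -/
lemma exists_traversal {C : Set E} (hC : G.IsCycle C) (hlf : ∀ g ∈ C, G.IsLink g)
    {e : E} {v' : V} (he : e ∈ C) (hinc : G.Inc v' e) :
    ∃ st L, G.ClosedSW v' (st :: L) ∧ eset (st :: L) = C ∧ st.1 = e := by
  classical
  obtain ⟨x, hx, hxv⟩ : ∃ x, ((G.fst e = v' ∧ G.snd e = x) ∨ (G.fst e = x ∧ G.snd e = v'))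
      ∧ x ≠ v' := by
    rcases hinc with h | h
    · exact ⟨G.snd e, Or.inl ⟨h, rfl⟩, fun hh => hlf e he (h.trans hh.symm)⟩
    · exact ⟨G.fst e, Or.inr ⟨rfl, h⟩, fun hh => hlf e he (hh.trans h.symm)⟩
  suffices key : ∀ k L, G.OpenSW v' ((e, x) :: L) → eset ((e, x) :: L) ⊆ C →
      C.ncard - ((e, x) :: L).length = k →
      ∃ st L', G.ClosedSW v' (st :: L') ∧ eset (st :: L') = C ∧ st.1 = e by
    refine key (C.ncard - 1) [] ⟨?_, by simp, by simp [hxv.symm], by simp⟩ ?_ (by simp)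
    · rw [isWalk_cons]
      exact ⟨hx, trivial⟩
    · intro a ha
      simp only [mem_eset, map_cons, map_nil, mem_cons, not_mem_nil, or_false] at ha
      subst ha; exact he
  intro k
  induction k using Nat.strong_induction_on with
  | _ k ihk =>
  intro L hosw hsub hk
  set M := (e, x) :: L with hM
  have hMne : M ≠ [] := by simp [hM]
  obtain ⟨hwalk, hLne, hndv, hnde⟩ := hosw
  set w := wEnd v' M with hw
  have hwm : w ∈ M.map Prod.snd := wEnd_mem_verts hMne
  have hvnm : v' ∉ M.map Prod.snd := (nodup_cons.mp hndv).1
  have hwv' : w ≠ v' := fun h => hvnm (h ▸ hwm)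
  -- the last step
  obtain ⟨M', stl, hMsplit⟩ : ∃ M' stl, M = M' ++ [stl] := by
    rcases List.eq_nil_or_concat M with h | ⟨M', stl, h⟩
    · exact absurd h hMne
    · exact ⟨M', stl, by simpa using h⟩
  have hstl2 : stl.2 = w := by rw [hw, hMsplit, wEnd_append]; rfl
  have hincw : G.Inc w stl.1 := by
    have hwalk' := hwalk
    rw [hMsplit, isWalk_append] at hwalk'
    have := (inc_walk_fst hwalk'.2).2
    rwa [hstl2] at this
  have hstlC : stl.1 ∈ C := hsub (by simp [hMsplit, eset])
  have hwVC : w ∈ G.VSet C := ⟨stl.1, hstlC, hincw⟩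
  have hdegC : (G.incSet C w).ncard = 2 := by
    rw [← deg_eq_ncard_incSet hC.1 hlf]
    exact hC.2.2.2 w hwVC
  obtain ⟨a, b, hab, hpairC⟩ := Set.ncard_eq_two.mp hdegC
  have hstlmem : stl.1 ∈ G.incSet C w := ⟨hstlC, hincw⟩
  obtain ⟨h', hh'mem, hh'ne⟩ : ∃ h', h' ∈ G.incSet C w ∧ h' ≠ stl.1 := by
    rw [hpairC, Set.mem_insert_iff, Set.mem_singleton_iff] at hstlmem
    rcases hstlmem with h | h
    · exact ⟨b, by rw [hpairC]; right; rfl, fun hh => hab ((hh.trans h).symm)⟩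
    · exact ⟨a, by rw [hpairC]; left; rfl, fun hh => hab (hh.trans h)⟩
  have hdegM : G.deg (eset M) w = 1 := by
    have := (OpenSW.rev ⟨hwalk, hLne, hndv, hnde⟩).deg_start
    rwa [wRev_eset, ← hw] at this
  have hh'notM : h' ∉ eset M := by
    intro hmem
    exact hh'ne (incSet_subsingleton_of_deg_le_one (eset_finite M) (le_of_eq hdegM)
      ⟨hmem, hh'mem.2⟩ ⟨by simp [hMsplit, eset], hincw⟩)
  obtain ⟨y, hy, hyw⟩ : ∃ y, ((G.fst h' = w ∧ G.snd h' = y) ∨ (G.fst h' = y ∧ G.snd h' = w))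
      ∧ y ≠ w := by
    rcases hh'mem.2 with h | h
    · exact ⟨G.snd h', Or.inl ⟨h, rfl⟩, fun hh => hlf h' hh'mem.1 (h.trans hh.symm)⟩
    · exact ⟨G.fst h', Or.inr ⟨rfl, h⟩, fun hh => hlf h' hh'mem.1 (hh.trans h.symm)⟩
  have hwalkext : ∀ z, ((G.fst h' = w ∧ G.snd h' = z) ∨ (G.fst h' = z ∧ G.snd h' = w)) →
      G.IsWalk v' (M ++ [(h', z)]) := by
    intro z hz
    rw [isWalk_append, ← hw]
    exact ⟨hwalk, by rw [isWalk_cons]; exact ⟨hz, trivial⟩⟩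
  have hndeext : (List.map Prod.fst (M ++ [(h', y)])).Nodup := by
    rw [map_append]
    refine hnde.append (by simp) ?_
    intro c hc1 hc2
    simp only [map_cons, map_nil, mem_cons, not_mem_nil, or_false] at hc2
    subst hc2
    exact hh'notM (by simpa [eset] using hc1)
  by_cases hyv : y = v'
  · -- close the walk
    rw [hyv] at hy hndeext
    have hclosed : G.ClosedSW v' (M ++ [(h', v')]) := by
      refine ⟨hwalkext v' hy, by simp, by rw [wEnd_append]; rfl, hndeext, ?_⟩
      have hdl : (List.map Prod.snd (M ++ [(h', v')])).dropLast = M.map Prod.snd := by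
        rw [map_append]
        simp
      rw [hdl]
      exact hndv
    have hcyc := hclosed.isCycle
    have hsub' : eset (M ++ [(h', v')]) ⊆ C := by
      rw [eset_append]
      rintro c (hc | hc)
      · exact hsub hc
      · simp only [mem_eset, map_cons, map_nil, mem_cons, not_mem_nil, or_false] at hc
        subst hc; exact hh'mem.1
    have heq := cycle_subset_eq hcyc hC hsub'
    refine ⟨(e, x), L ++ [(h', v')], by rwa [hM, cons_append] at hclosed, ?_, rfl⟩
    rw [← cons_append, ← hM]
    exact heq
  · -- extend the walk
    have hynm : y ∉ v' :: M.map Prod.snd := by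
      intro hym
      rcases mem_cons.mp hym with rfl | hym'
      · exact hyv rfl
      · -- y is an interior vertex: contradiction via degrees
        have hIncyh' : G.Inc y h' := by rcases hy with ⟨h1, h2⟩ | ⟨h1, h2⟩
                                        · exact Or.inr h2
                                        · exact Or.inl h1
        have hlfM : ∀ g ∈ eset M, G.IsLink g := fun g hg => hlf g (hsub hg)
        have hsplitM : M.map Prod.snd = (M.map Prod.snd).dropLast ++ [w] := by
          rw [hw]; exact map_snd_eq_dropLast hMne
        have hydl : y ∈ (M.map Prod.snd).dropLast := by
          rw [hsplitM] at hym'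
          rcases mem_append.mp hym' with h | h
          · exact h
          · rw [List.mem_singleton] at h; exact absurd h hyw
        have hdegy : G.deg (eset M) y = 2 := by
          rw [deg_eset_walk hwalk hnde]
          rw [dropLast_cons_of_ne_nil (by simpa using hMne), vcnt_cons,
            if_neg (fun h => hyv h.symm)]
          have hnd1 : (M.map Prod.snd).Nodup := (nodup_cons.mp hndv).2
          have hnddl : ((M.map Prod.snd).dropLast).Nodup := hnd1.sublist (dropLast_sublist _)
          rw [vcnt_eq_one hnddl hydl, vcnt_eq_one hnd1 hym']
        have hncardy : (G.incSet (eset M) y).ncard = 2 := by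
          rw [← deg_eq_ncard_incSet (eset_finite M) hlfM, hdegy]
        obtain ⟨p, q, hpq, hpqeq⟩ := Set.ncard_eq_two.mp hncardy
        have hpC : p ∈ G.incSet C y := by
          have : p ∈ G.incSet (eset M) y := by rw [hpqeq]; left; rfl
          exact ⟨hsub this.1, this.2⟩
        have hqC : q ∈ G.incSet C y := by
          have : q ∈ G.incSet (eset M) y := by rw [hpqeq]; right; rfl
          exact ⟨hsub this.1, this.2⟩
        have hpM : p ∈ G.incSet (eset M) y := by rw [hpqeq]; left; rfl
        have hqM : q ∈ G.incSet (eset M) y := by rw [hpqeq]; right; rfl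
        have hph' : p ≠ h' := fun h => hh'notM (h ▸ hpM.1)
        have hqh' : q ≠ h' := fun h => hh'notM (h ▸ hqM.1)
        have hyVC : y ∈ G.VSet C := ⟨p, hpC.1, hpC.2⟩
        have hdegyC : (G.incSet C y).ncard = 2 := by
          rw [← deg_eq_ncard_incSet hC.1 hlf]
          exact hC.2.2.2 y hyVC
        have hsub3 : {h', p, q} ⊆ G.incSet C y := by
          rintro c (rfl | rfl | rfl)
          · exact ⟨hh'mem.1, hIncyh'⟩
          · exact hpC
          · exact hqC
        have h3 : ({h', p, q} : Set E).ncard = 3 := by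
          rw [Set.ncard_insert_of_notMem (by simp [hph'.symm, hqh'.symm])
            ((Set.finite_singleton q).insert p), Set.ncard_pair hpq]
        have := Set.ncard_le_ncard hsub3 (incSet_finite hC.1 y)
        omega
    have hosw' : G.OpenSW v' (M ++ [(h', y)]) := by
      refine ⟨hwalkext y hy, by simp, ?_, hndeext⟩
      rw [map_append]
      have : v' :: (M.map Prod.snd ++ List.map Prod.snd [(h', y)])
          = (v' :: M.map Prod.snd) ++ [y] := by simp
      rw [this]
      refine hndv.append (by simp) ?_
      intro c hc1 hc2
      rw [List.mem_singleton] at hc2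
      subst hc2
      exact hynm hc1
    have hsub'' : eset (M ++ [(h', y)]) ⊆ C := by
      rw [eset_append]
      rintro c (hc | hc)
      · exact hsub hc
      · simp only [mem_eset, map_cons, map_nil, mem_cons, not_mem_nil, or_false] at hc
        subst hc; exact hh'mem.1
    have hlen : (M ++ [(h', y)]).length ≤ C.ncard := by
      have := length_le_ncard (l := (M ++ [(h', y)]).map Prod.fst) hndeext
        (fun c hc => hsub'' hc) hC.1
      simpa using this
    have hlen' : M.length + 1 ≤ C.ncard := by simpa using hlen
    refine ihk (C.ncard - (M.length + 1)) (by omega) (L ++ [(h', y)]) ?_ ?_ ?_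
    · rwa [hM, cons_append] at hosw'
    · rwa [hM, cons_append] at hsub''
    · simp only [length_cons, length_append, hM, length_nil]

end MultiGraph

end AuxWalks6
section AuxWalks7

open Classical List

namespace MultiGraph

variable {V : Type u} {E : Type v} {G : MultiGraph V E}

/-- Splitting a closed simple walk at an interior vertex gives two arcs. -/
lemma split_closedSW {v : V} {L : List (E × V)} (h : G.ClosedSW v L) {u : V}
    (hu : u ∈ L.map Prod.snd) (huv : u ≠ v) :
    ∃ L₁ L₂, L = L₁ ++ L₂ ∧ G.OpenSW v L₁ ∧ G.OpenSW u L₂ ∧ wEnd v L₁ = u ∧ wEnd u L₂ = v ∧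
      (∀ a, a ∈ v :: L₁.map Prod.snd → a ∈ u :: L₂.map Prod.snd → a = v ∨ a = u) ∧
      (∀ c, c ∈ eset L₁ → c ∉ eset (V := V) L₂) := by
  obtain ⟨hwalk, hLne, hend, hnde, hndv⟩ := h
  obtain ⟨st, hstmem, hst2⟩ := List.mem_map.mp hu
  obtain ⟨l₁, l₂, rfl⟩ := List.append_of_mem hstmem
  set L₁ := l₁ ++ [st] with hL₁
  have hLsplit : l₁ ++ st :: l₂ = L₁ ++ l₂ := by simp [hL₁]
  have hendL₁ : wEnd v L₁ = u := by
    rw [hL₁, wEnd_append]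
    simpa using hst2
  have hl₂ne : l₂ ≠ [] := by
    rintro rfl
    exact huv (hendL₁.symm.trans (by simpa [hL₁] using hend))
  -- structure of the vertex lists
  have hmapsnd : (l₁ ++ st :: l₂).map Prod.snd = L₁.map Prod.snd ++ l₂.map Prod.snd := by
    simp [hL₁]
  have hdl : ((l₁ ++ st :: l₂).map Prod.snd).dropLast
      = L₁.map Prod.snd ++ (l₂.map Prod.snd).dropLast := by
    rw [hmapsnd, dropLast_append_of_ne_nil (by simpa using hl₂ne)]
  rw [hdl] at hndv
  rw [nodup_cons] at hndv
  obtain ⟨hvni, hndi⟩ := hndv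
  have hnd₁ : (L₁.map Prod.snd).Nodup := hndi.sublist (sublist_append_left _ _)
  have hnddl₂ : ((l₂.map Prod.snd).dropLast).Nodup := hndi.sublist (sublist_append_right _ _)
  have hdisj : ∀ a ∈ L₁.map Prod.snd, a ∉ (l₂.map Prod.snd).dropLast :=
    fun a ha hb => (List.disjoint_of_nodup_append hndi) ha hb
  have hvl₁ : v ∉ L₁.map Prod.snd := fun hm => hvni (mem_append.mpr (Or.inl hm))
  have hvl₂ : v ∉ (l₂.map Prod.snd).dropLast := fun hm => hvni (mem_append.mpr (Or.inr hm))
  have hsndl₂ : l₂.map Prod.snd = (l₂.map Prod.snd).dropLast ++ [v] := by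
    have h1 : wEnd u l₂ = v := by
      have := hend
      rw [hLsplit, wEnd_append, hendL₁] at this
      exact this
    rw [← h1]
    exact map_snd_eq_dropLast (u := u) hl₂ne
  have humem : u ∈ L₁.map Prod.snd := by
    rw [hL₁]
    simp [hst2]
  have hul₂ : u ∉ l₂.map Prod.snd := by
    rw [hsndl₂]
    intro hm
    rcases mem_append.mp hm with h' | h'
    · exact hdisj u humem h'
    · rw [List.mem_singleton] at h'
      exact huv h'
  have hwalks := hwalk
  rw [hLsplit, isWalk_append, hendL₁] at hwalks
  have hndeL : ((L₁ ++ l₂).map Prod.fst).Nodup := by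
    rw [← hLsplit]; exact hnde
  rw [map_append] at hndeL
  refine ⟨L₁, l₂, by simp [hL₁], ⟨hwalks.1, by simp [hL₁], ?_, ?_⟩,
    ⟨hwalks.2, hl₂ne, ?_, ?_⟩, hendL₁, ?_, ?_, ?_⟩
  · rw [nodup_cons]; exact ⟨hvl₁, hnd₁⟩
  · exact hndeL.sublist (sublist_append_left _ _)
  · rw [nodup_cons]
    refine ⟨hul₂, ?_⟩
    rw [hsndl₂]
    refine hnddl₂.append (by simp) ?_
    intro a ha hb
    rw [List.mem_singleton] at hb
    subst hb
    exact hvl₂ ha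
  · exact hndeL.sublist (sublist_append_right _ _)
  · have := hend
    rw [hLsplit, wEnd_append, hendL₁] at this
    exact this
  · intro a ha hb
    rcases mem_cons.mp ha with rfl | ha'
    · exact Or.inl rfl
    rcases mem_cons.mp hb with rfl | hb'
    · exact Or.inr rfl
    rw [hsndl₂] at hb'
    rcases mem_append.mp hb' with h' | h'
    · exact absurd h' (hdisj a ha')
    · rw [List.mem_singleton] at h'
      exact Or.inl h'
  · intro c hc hc'
    simp only [mem_eset] at hc hc'
    exact (List.disjoint_of_nodup_append (by rw [← map_append, ← hLsplit]; exact hnde)) hc hc'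

/-- Edges of a walk avoiding `VSet D` internally are not in `D`. -/
lemma edges_not_in {u : V} {D : Set E} :
    ∀ {L : List (E × V)}, G.IsWalk u L → u ∉ G.VSet D →
      (∀ x ∈ (L.map Prod.snd).dropLast, x ∉ G.VSet D) → ∀ st ∈ L, st.1 ∉ D := by
  intro L
  induction L generalizing u with
  | nil => intro _ _ _ st hst; simp at hst
  | cons st' L' ih =>
    intro hwalk hu hint st hst
    rw [isWalk_cons] at hwalk
    rcases mem_cons.mp hst with rfl | hst'
    · intro hD
      exact hu ⟨st.1, hD, (inc_walk_fst (by rw [isWalk_cons]; exact hwalk)).1⟩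
    · rcases eq_or_ne L' [] with rfl | hL'
      · simp at hst'
      · have hst2 : st'.2 ∉ G.VSet D := by
          apply hint
          rw [map_cons, dropLast_cons_of_ne_nil (by simpa using hL')]
          simp
        refine ih hwalk.2 hst2 ?_ st hst'
        intro x hx
        apply hint
        rw [map_cons, dropLast_cons_of_ne_nil (by simpa using hL')]
        exact mem_cons_of_mem _ hx
  
/-- Ear extraction: a walk between `VSet D` vertices containing an edge outside `D`
contains a contiguous subwalk with ends in `VSet D`, interior outside, edges outside `D`. -/
lemma ear_extract {D : Set E} :
    ∀ (n : ℕ) (u : V) (L : List (E × V)), L.length ≤ n → G.IsWalk u L →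
      u ∈ G.VSet D → wEnd u L ∈ G.VSet D → (∃ c ∈ L.map Prod.fst, c ∉ D) →
      ∃ L₀ L' L₂, L = L₀ ++ L' ++ L₂ ∧ L' ≠ [] ∧ (∀ st ∈ L', st.1 ∉ D) ∧
        (∀ x ∈ (L'.map Prod.snd).dropLast, x ∉ G.VSet D) ∧
        wEnd u L₀ ∈ G.VSet D ∧ wEnd (wEnd u L₀) L' ∈ G.VSet D := by
  intro n
  induction n with
  | zero =>
    intro u L hlen _ _ _ hbad
    obtain ⟨c, hc, _⟩ := hbad
    rw [List.length_eq_zero_iff.mp (Nat.le_zero.mp hlen)] at hc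
    simp at hc
  | succ n ihn =>
    intro u L hlen hwalk hu hend hbad
    by_cases hsplit : ∃ x ∈ (L.map Prod.snd).dropLast, x ∈ G.VSet D
    · -- split at an interior VSet D vertex and recurse
      obtain ⟨x, hxmem, hxD⟩ := hsplit
      rw [← map_dropLast] at hxmem
      obtain ⟨st, hstmem, hst2⟩ := List.mem_map.mp hxmem
      obtain ⟨s, t, hst⟩ := List.append_of_mem hstmem
      have hLne : L ≠ [] := by rintro rfl; simp at hstmem
      obtain ⟨P, hP⟩ : ∃ P, P = s ++ [st] := ⟨_, rfl⟩
      obtain ⟨Q, hQ⟩ : ∃ Q, Q = t ++ [L.getLast hLne] := ⟨_, rfl⟩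
      have hLs : L = P ++ Q := by
        conv_lhs => rw [← dropLast_append_getLast (l := L) hLne]
        rw [hst, hP, hQ]
        simp
      have hPne : P ≠ [] := by rw [hP]; simp
      have hQne : Q ≠ [] := by rw [hQ]; simp
      have hwalk' := hwalk
      rw [hLs, isWalk_append] at hwalk'
      have hendP : wEnd u P = x := by rw [hP, wEnd_append]; simpa using hst2
      have hlenPQ : P.length + Q.length = L.length := by rw [hLs]; simp
      have hendQ : wEnd x Q = wEnd u L := by
        conv_rhs => rw [hLs]
        rw [wEnd_append, hendP]
      rcases hbad with ⟨c, hc, hcD⟩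
      have hc' : c ∈ P.map Prod.fst ∨ c ∈ Q.map Prod.fst := by
        rw [hLs] at hc
        simpa [mem_append] using hc
      rcases hc' with hcP | hcQ
      · obtain ⟨L₀, L', L₂, hdec, hne, hed, hin, he₁, he₂⟩ :=
          ihn u P (by have h1 := hlenPQ
                      have h2 : Q.length ≥ 1 := by rw [hQ]; simp [Nat.succ_le_iff]
                      omega)
            hwalk'.1 hu (by rw [hendP]; exact hxD) ⟨c, hcP, hcD⟩
        refine ⟨L₀, L', L₂ ++ Q, ?_, hne, hed, hin, he₁, he₂⟩
        rw [hLs, hdec]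
        simp
      · obtain ⟨L₀, L', L₂, hdec, hne, hed, hin, he₁, he₂⟩ :=
          ihn x Q (by have h1 := hlenPQ
                      have h2 : P.length ≥ 1 := by rw [hP]; simp [Nat.succ_le_iff]
                      omega)
            (by rw [← hendP]; exact hwalk'.2) hxD (by rw [hendQ]; exact hend) ⟨c, hcQ, hcD⟩
        refine ⟨P ++ L₀, L', L₂, ?_, hne, hed, hin, ?_, ?_⟩
        · rw [hLs, hdec]
          simp
        · rw [wEnd_append, hendP]
          exact he₁
        · rw [wEnd_append, hendP]
          exact he₂
    · -- no interior vertex lies on D: the whole walk is an ear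
      push_neg at hsplit
      refine ⟨[], L, [], by simp, by rintro rfl; simp at hbad, ?_, hsplit, by simpa, by simpa⟩
      cases L with
      | nil => simp at hbad
      | cons st' L' =>
        rcases eq_or_ne L' [] with rfl | hL'
        · intro st hst
          rw [List.mem_singleton] at hst
          subst hst
          obtain ⟨c, hc, hcD⟩ := hbad
          simp only [map_cons, map_nil, mem_cons, not_mem_nil, or_false] at hc
          subst hc
          exact hcD
        · intro st hst
          rw [isWalk_cons] at hwalk
          have hst2' : st'.2 ∉ G.VSet D := by
            apply hsplit
            rw [map_cons, dropLast_cons_of_ne_nil (by simpa using hL')]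
            simp
          rcases mem_cons.mp hst with rfl | hst'
          · intro hD
            exact hst2' ⟨st.1, hD, (inc_walk_fst (by rw [isWalk_cons]; exact hwalk)).2⟩
          · refine edges_not_in hwalk.2 hst2' ?_ st hst'
            intro y hy
            apply hsplit
            rw [map_cons, dropLast_cons_of_ne_nil (by simpa using hL')]
            exact mem_cons_of_mem _ hy

/-- First vertex of a walk lying in a given set. -/
lemma first_hit {S : Set V} :
    ∀ {u : V} {L : List (E × V)}, G.IsWalk u L → (∃ x ∈ L.map Prod.snd, x ∈ S) →
      ∃ L₁ L₂, L = L₁ ++ L₂ ∧ L₁ ≠ [] ∧ wEnd u L₁ ∈ S ∧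
        ∀ x ∈ (L₁.map Prod.snd).dropLast, x ∉ S := by
  intro u L
  induction L generalizing u with
  | nil => rintro _ ⟨x, hx, _⟩; simp at hx
  | cons st L' ih =>
    intro hwalk hex
    rw [isWalk_cons] at hwalk
    by_cases hst : st.2 ∈ S
    · exact ⟨[st], L', rfl, by simp, by simpa using hst, by simp⟩
    · obtain ⟨x, hx, hxS⟩ := hex
      have hx' : x ∈ L'.map Prod.snd := by
        rw [map_cons, mem_cons] at hx
        rcases hx with rfl | h'
        · exact absurd hxS hst
        · exact h'
      obtain ⟨L₁, L₂, hdec, hne, hend', hint⟩ := ih hwalk.2 ⟨x, hx', hxS⟩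
      refine ⟨st :: L₁, L₂, by rw [hdec]; rfl, by simp, by simpa using hend', ?_⟩
      intro y hy
      rw [map_cons, dropLast_cons_of_ne_nil (by simpa using hne)] at hy
      rcases mem_cons.mp hy with rfl | hy'
      · exact hst
      · exact hint y hy'

end MultiGraph

end AuxWalks7
section AuxWalks8

open Classical List

namespace MultiGraph

variable {V : Type u} {E : Type v} {G : MultiGraph V E}

/-- Extraction of an ear of a cycle `C` relative to `D`. -/
lemma ear_of_cycle {C D : Set E} {v : V} {e f : E} (hC : G.IsCycle C)
    (he : e ∈ C) (hf : f ∈ C) (hef : e ≠ f) (hle : G.IsLink e) (hlf : G.IsLink f)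
    (hve : G.Inc v e) (hvf : G.Inc v f) (heD : e ∈ D) (hfD : f ∈ D)
    {c : E} (hcC : c ∈ C) (hcD : c ∉ D) :
    ∃ uA uB L', G.OpenSW uA L' ∧ wEnd uA L' = uB ∧ uA ≠ uB ∧
      uA ∈ G.VSet D ∧ uB ∈ G.VSet D ∧ uA ≠ v ∧ uB ≠ v ∧ eset L' ⊆ C ∧
      (∀ a ∈ eset (V := V) L', a ∉ D) ∧
      (∀ x ∈ (L'.map Prod.snd).dropLast, x ∉ G.VSet D) ∧
      v ∉ {x | x ∈ uA :: L'.map Prod.snd} := by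
  have hlfC : ∀ g ∈ C, G.IsLink g := cycle_no_loop hC he hf hef
  obtain ⟨st, L, hcl, hesetC, hst1⟩ := exists_traversal hC hlfC he hve
  set M := st :: L with hM
  obtain ⟨hwalkM, hMne, hendM, hndeM, hndvM⟩ := hcl
  have hvVD : v ∈ G.VSet D := ⟨e, heD, hve⟩
  have hincpair : G.incSet C v = {e, f} := cycle_incSet_pair hC he hf hef hle hlf hve hvf
  -- ear extraction on the traversal of C
  obtain ⟨L₀, L', L₂, hdec, hL'ne, hed, hin, heA, heB⟩ :=
    ear_extract (D := D) M.length v M le_rfl hwalkM hvVD (by rw [hendM]; exact hvVD)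
      ⟨c, by rw [← hesetC] at hcC; exact hcC, hcD⟩
  set uA := wEnd v L₀ with huA
  set uB := wEnd uA L' with huB
  -- L₀ is nonempty: otherwise the first edge e of the traversal would avoid D
  have hL₀ne : L₀ ≠ [] := by
    rintro rfl
    cases L' with
    | nil => exact hL'ne rfl
    | cons st' L'' =>
      have : st' = st := by
        have := hdec
        simp only [nil_append, cons_append] at this
        exact (List.cons_eq_cons.mp this.symm).1
      subst this
      exact hed st' mem_cons_self (by rw [hst1]; exact heD)
  -- L₂ is nonempty: otherwise the last edge of the ear would be incident to v
  have hL₂ne : L₂ ≠ [] := by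
    rintro rfl
    obtain ⟨P', stl, hP'⟩ : ∃ P' stl, L' = P' ++ [stl] := by
      rcases List.eq_nil_or_concat L' with h | ⟨P', stl, h⟩
      · exact absurd h hL'ne
      · exact ⟨P', stl, by simpa using h⟩
    have hstl2 : stl.2 = v := by
      have h1 : wEnd v M = v := hendM
      rw [hdec] at h1
      simp only [append_nil] at h1
      rw [wEnd_append, ← huA, hP', wEnd_append] at h1
      simpa using h1
    have hwalkL' : G.IsWalk uA L' := by
      have := hwalkM
      rw [hdec] at this
      simp only [append_nil] at this
      rw [isWalk_append] at this
      exact this.2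
    have hincv : G.Inc v stl.1 := by
      rw [hP', isWalk_append] at hwalkL'
      have := (inc_walk_fst hwalkL'.2).2
      rwa [hstl2] at this
    have hstlC : stl.1 ∈ C := by
      rw [← hesetC, hdec]
      simp [hP', eset]
    have : stl.1 ∈ G.incSet C v := ⟨hstlC, hincv⟩
    rw [hincpair] at this
    have hstlD : stl.1 ∈ D := by
      rcases this with h | h
      · rw [h]; exact heD
      · rw [h]; exact hfD
    exact hed stl (by rw [hP']; simp) hstlD
  -- vertex-list structure
  have hsndM : M.map Prod.snd
      = (L₀.map Prod.snd ++ L'.map Prod.snd) ++ L₂.map Prod.snd := by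
    rw [hdec]; simp
  have hdlM : (M.map Prod.snd).dropLast
      = (L₀.map Prod.snd ++ L'.map Prod.snd) ++ (L₂.map Prod.snd).dropLast := by
    rw [hsndM, dropLast_append_of_ne_nil (by simpa using hL₂ne)]
  rw [hdlM, nodup_cons] at hndvM
  obtain ⟨hvnI, hndI⟩ := hndvM
  have hnd01 : (L₀.map Prod.snd ++ L'.map Prod.snd).Nodup :=
    hndI.sublist (sublist_append_left _ _)
  have huAmem : uA ∈ L₀.map Prod.snd := wEnd_mem_verts hL₀ne
  have huBmem : uB ∈ L'.map Prod.snd := wEnd_mem_verts hL'ne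
  have huAuB : uA ≠ uB := by
    intro h
    exact (List.disjoint_of_nodup_append hnd01) huAmem (h ▸ huBmem) 
  have hvn0 : v ∉ L₀.map Prod.snd :=
    fun hm => hvnI (mem_append.mpr (Or.inl (mem_append.mpr (Or.inl hm))))
  have hvn1 : v ∉ L'.map Prod.snd :=
    fun hm => hvnI (mem_append.mpr (Or.inl (mem_append.mpr (Or.inr hm))))
  have huAv : uA ≠ v := fun h => hvn0 (h ▸ huAmem)
  have huBv : uB ≠ v := fun h => hvn1 (h ▸ huBmem)
  have hwalkL' : G.IsWalk uA L' := by
    have := hwalkM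
    rw [hdec, append_assoc, isWalk_append, isWalk_append] at this
    exact this.2.1
  have hosw : G.OpenSW uA L' := by
    refine ⟨hwalkL', hL'ne, ?_, ?_⟩
    · rw [nodup_cons]
      refine ⟨fun hm => (List.disjoint_of_nodup_append hnd01) huAmem hm, ?_⟩
      exact hndI.sublist ((sublist_append_right _ _).trans (sublist_append_left _ _))
    · have : (M.map Prod.fst) = L₀.map Prod.fst ++ L'.map Prod.fst ++ L₂.map Prod.fst := by
        rw [hdec]; simp
      rw [this] at hndeM
      exact hndeM.sublist ((sublist_append_right _ _).trans (sublist_append_left _ _))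
  refine ⟨uA, uB, L', hosw, rfl, huAuB, heA, heB, huAv, huBv, ?_, ?_, hin, ?_⟩
  · intro a ha
    rw [← hesetC, hdec]
    simp only [mem_eset, map_append, mem_append] at ha ⊢
    tauto
  · intro a ha
    simp only [mem_eset, mem_map] at ha
    obtain ⟨stx, hstx, rfl⟩ := ha
    exact hed stx hstx
  · simp only [Set.mem_setOf_eq, mem_cons]
    rintro (h | h)
    · exact huAv h.symm
    · exact hvn1 h

end MultiGraph

end AuxWalks8
section AuxWalks9

open Classical List

namespace MultiGraph

variable {V : Type u} {E : Type v} {G : MultiGraph V E}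

lemma mem_verts_wRev {u a : V} {L : List (E × V)} (hL : L ≠ []) :
    a ∈ wEnd u L :: (wRev u L).map Prod.snd ↔ a ∈ u :: L.map Prod.snd := by
  have hcons : u :: L.map Prod.snd = (u :: L.map Prod.snd).dropLast ++ [wEnd u L] := by
    rw [dropLast_cons_of_ne_nil (by simpa using hL), cons_append]
    congr 1
    exact map_snd_eq_dropLast hL
  rw [wRev_map_snd]
  conv_rhs => rw [hcons]
  simp [or_comm]

end MultiGraph

lemma symmDiff_helper {E : Type v} {A A' P D : Set E} (hD : D = A ∪ A')
    (hAA' : ∀ a, ¬(a ∈ A ∧ a ∈ A')) (hPD : ∀ a ∈ P, a ∉ D) :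
    symmDiff D (P ∪ A') = P ∪ A := by
  ext a
  have h1 := hAA' a
  have h2 := hPD a
  rw [hD] at h2
  rw [Set.mem_symmDiff, hD]
  simp only [Set.mem_union]
  tauto

namespace BiasedGraph

open MultiGraph

variable {V : Type u} {E : Type v} {Ω : BiasedGraph V E}

/-- Key rerouting step: replace a balanced cycle `D` through `e, f` at `v` by one
closer to `C`, keeping balance. -/
lemma key_step (hθ : Ω.ThetaProperty) (v : V)
    (hbal : ∀ C : Set E, Ω.toMultiGraph.IsCycle C → v ∉ Ω.toMultiGraph.VSet C →
      C ∈ Ω.Balanced)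
    {e f : E} (hef : e ≠ f) (hle : Ω.toMultiGraph.IsLink e) (hlf : Ω.toMultiGraph.IsLink f)
    (hve : Ω.toMultiGraph.Inc v e) (hvf : Ω.toMultiGraph.Inc v f)
    {C D : Set E} (hC : Ω.toMultiGraph.IsCycle C) (hD : Ω.toMultiGraph.IsCycle D)
    (heC : e ∈ C) (hfC : f ∈ C) (heD : e ∈ D) (hfD : f ∈ D)
    (hDbal : D ∈ Ω.Balanced) (hnsub : ¬ C ⊆ D) :
    ∃ D', Ω.toMultiGraph.IsCycle D' ∧ e ∈ D' ∧ f ∈ D' ∧ D' ∈ Ω.Balanced ∧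
      D' \ C ⊂ D \ C := by
  set G := Ω.toMultiGraph with hG
  obtain ⟨c, hcC, hcD⟩ := Set.not_subset.mp hnsub
  have hlfD : ∀ g ∈ D, G.IsLink g := cycle_no_loop hD heD hfD hef
  have hvVC : v ∈ G.VSet C := ⟨e, heC, hve⟩
  -- ear of C over D
  obtain ⟨uA, uB, L', hosw, hendL', hAB, hAVD, hBVD, hAv, hBv, hPsubC, hPnotD, hPint, hvP⟩ :=
    ear_of_cycle (G := G) hC heC hfC hef hle hlf hve hvf heD hfD hcC hcD
  -- traversal of D from uA and split at uB
  obtain ⟨h₀, hh₀D, hh₀inc⟩ := hAVD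
  obtain ⟨stN, LN, hclN, hesetN, _⟩ :=
    exists_traversal hD hlfD hh₀D (hh₀inc : G.Inc uA h₀)
  have hVD_eq : G.VSet D = {x | x ∈ uA :: (stN :: LN).map Prod.snd} := by
    rw [← hesetN]
    exact VSet_eset hclN.1 (by simp)
  have huBmem : uB ∈ (stN :: LN).map Prod.snd := by
    have := hBVD
    rw [hVD_eq] at this
    simp only [Set.mem_setOf_eq, mem_cons] at this
    rcases this with h | h
    · exact absurd h.symm hAB
    · exact h
  obtain ⟨N₁, N₂, hNdec, hosw₁, hosw₂, hend₁, hend₂, hvint, hedisj⟩ :=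
    split_closedSW hclN huBmem (Ne.symm hAB)
  -- edge sets
  have hDsplit : D = eset N₁ ∪ eset N₂ := by
    rw [← hesetN, hNdec, eset_append]
  have hsnd_sub₁ : ∀ a ∈ N₁.map Prod.snd, a ∈ (stN :: LN).map Prod.snd := by
    intro a ha
    rw [hNdec, map_append, mem_append]
    exact Or.inl ha
  have hsnd_sub₂ : ∀ a ∈ N₂.map Prod.snd, a ∈ (stN :: LN).map Prod.snd := by
    intro a ha
    rw [hNdec, map_append, mem_append]
    exact Or.inr ha
  have hverts₁ : ∀ a, a ∈ uA :: N₁.map Prod.snd → a ∈ G.VSet D := by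
    intro a ha
    rw [hVD_eq]
    rcases mem_cons.mp ha with rfl | h
    · simp
    · simp only [Set.mem_setOf_eq, mem_cons]
      exact Or.inr (hsnd_sub₁ a h)
  have hverts₂ : ∀ a, a ∈ uB :: N₂.map Prod.snd → a ∈ G.VSet D := by
    intro a ha
    rcases mem_cons.mp ha with rfl | h
    · exact hBVD
    · rw [hVD_eq]
      simp only [Set.mem_setOf_eq, mem_cons]
      exact Or.inr (hsnd_sub₂ a h)
  -- ear vertex facts
  have hPvert : ∀ a ∈ L'.map Prod.snd, a = uB ∨ a ∉ G.VSet D := by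
    intro a ha
    have hsplit : L'.map Prod.snd = (L'.map Prod.snd).dropLast ++ [uB] := by
      rw [← hendL']
      exact map_snd_eq_dropLast hosw.2.1
    rw [hsplit] at ha
    rcases mem_append.mp ha with h | h
    · exact Or.inr (hPint a h)
    · rw [List.mem_singleton] at h
      exact Or.inl h
  -- the two joined cycles
  have hrev₁ : G.OpenSW uB (wRev uA N₁) := by
    have := hosw₁.rev
    rwa [hend₁] at this
  have hrevend : wEnd uB (wRev uA N₁) = uA := by
    have := wRev_wEnd uA N₁
    rwa [hend₁] at this
  have hrevverts : ∀ a, a ∈ uB :: (wRev uA N₁).map Prod.snd → a ∈ uA :: N₁.map Prod.snd := by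
    intro a ha
    rw [← hend₁] at ha
    exact (mem_verts_wRev hosw₁.2.1).mp ha
  have hW₂ : G.ClosedSW uA (L' ++ wRev uA N₁) := by
    refine join_closedSW hosw hrev₁ hendL' hrevend hAB ?_ ?_
    · intro a ha hb
      have hbD : a ∈ G.VSet D := hverts₁ a (hrevverts a hb)
      rcases mem_cons.mp ha with rfl | h
      · exact Or.inl rfl
      · rcases hPvert a h with rfl | h'
        · exact Or.inr rfl
        · exact absurd hbD h'
    · intro a ha hb
      rw [wRev_eset] at hb
      exact hPnotD a ha (hDsplit ▸ Set.mem_union_left _ hb)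
  have hW₁ : G.ClosedSW uA (L' ++ N₂) := by
    refine join_closedSW hosw hosw₂ hendL' hend₂ hAB ?_ ?_
    · intro a ha hb
      have hbD : a ∈ G.VSet D := hverts₂ a hb
      rcases mem_cons.mp ha with rfl | h
      · exact Or.inl rfl
      · rcases hPvert a h with rfl | h'
        · exact Or.inr rfl
        · exact absurd hbD h'
    · intro a ha hb
      exact hPnotD a ha (hDsplit ▸ Set.mem_union_right _ hb)
  have hZ₂cyc : G.IsCycle (eset L' ∪ eset N₁) := by
    have := hW₂.isCycle
    rwa [eset_append, wRev_eset] at this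
  have hZ₁cyc : G.IsCycle (eset L' ∪ eset N₂) := by
    have := hW₁.isCycle
    rwa [eset_append] at this
  have hVZ₂ : G.VSet (eset L' ∪ eset N₁)
      = {x | x ∈ uA :: (L' ++ wRev uA N₁).map Prod.snd} := by
    rw [← wRev_eset uA N₁, ← eset_append]
    exact VSet_eset hW₂.1 hW₂.2.1
  have hVZ₁ : G.VSet (eset L' ∪ eset N₂)
      = {x | x ∈ uA :: (L' ++ N₂).map Prod.snd} := by
    rw [← eset_append]
    exact VSet_eset hW₁.1 hW₁.2.1
  have hvL' : v ∉ L'.map Prod.snd := by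
    intro h
    exact hvP (by simp only [Set.mem_setOf_eq, mem_cons]; exact Or.inr h)
  -- disjointness facts
  have hA₁A₂ : ∀ a, ¬(a ∈ eset N₁ ∧ a ∈ eset (V := V) N₂) := fun a h => hedisj a h.1 h.2
  have hPD' : ∀ a ∈ eset L', a ∉ D := hPnotD
  -- v lies on exactly one arc
  have hvmem : v ∈ (stN :: LN).map Prod.snd := by
    have : v ∈ G.VSet D := ⟨e, heD, hve⟩
    rw [hVD_eq] at this
    simp only [Set.mem_setOf_eq, mem_cons] at this
    rcases this with h | h
    · exact absurd h.symm hAv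
    · exact h
  have hvsplit : v ∈ N₁.map Prod.snd ∨ v ∈ N₂.map Prod.snd := by
    rw [hNdec, map_append] at hvmem
    exact mem_append.mp hvmem
  rcases hvsplit with hv₁ | hv₂
  · -- v on arc N₁ : Z₁ = P ∪ N₂ avoids v, new cycle D' = P ∪ N₁
    have hvZ₁ : v ∉ G.VSet (eset L' ∪ eset N₂) := by
      rw [hVZ₁]
      simp only [Set.mem_setOf_eq, mem_cons, map_append, mem_append]
      rintro (h | h | h)
      · exact hAv h.symm
      · exact hvL' h
      · rcases hvint v (mem_cons_of_mem _ hv₁) (mem_cons_of_mem _ h) with h' | h'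
        · exact hAv h'.symm
        · exact hBv h'.symm
    have hZ₁bal : eset L' ∪ eset N₂ ∈ Ω.Balanced := hbal _ hZ₁cyc hvZ₁
    have hsd : symmDiff D (eset L' ∪ eset N₂) = eset L' ∪ eset N₁ :=
      symmDiff_helper hDsplit hA₁A₂ hPD'
    have hD'bal : eset L' ∪ eset N₁ ∈ Ω.Balanced :=
      hθ.2 D (eset L' ∪ eset N₂) (eset L' ∪ eset N₁) hD hZ₁cyc hZ₂cyc hsd.symm hDbal hZ₁bal
    have heD' : e ∈ eset N₁ := by
      have : e ∈ eset N₁ ∪ eset N₂ := hDsplit ▸ heD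
      rcases this with h | h
      · exact h
      · exact absurd ⟨e, Set.mem_union_right _ h, hve⟩ hvZ₁
    have hfD' : f ∈ eset N₁ := by
      have : f ∈ eset N₁ ∪ eset N₂ := hDsplit ▸ hfD
      rcases this with h | h
      · exact h
      · exact absurd ⟨f, Set.mem_union_right _ h, hvf⟩ hvZ₁
    refine ⟨eset L' ∪ eset N₁, hZ₂cyc, Set.mem_union_right _ heD',
      Set.mem_union_right _ hfD', hD'bal, ?_⟩
    constructor
    · rintro a ⟨ha, haC⟩
      rcases ha with h | h
      · exact absurd (hPsubC h) haC
      · exact ⟨hDsplit ▸ Set.mem_union_left _ h, haC⟩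
    · intro hsub'
      -- A₂ ⊆ C would make Z₁ = C, contradicting v ∈ VSet C
      have hA₂C : ¬ (eset N₂ ⊆ C) := by
        intro hA₂C
        have hZ₁C : eset L' ∪ eset N₂ ⊆ C := Set.union_subset hPsubC hA₂C
        have := cycle_subset_eq hZ₁cyc hC hZ₁C
        rw [← this] at hvVC
        exact hvZ₁ hvVC
      obtain ⟨a, haA₂, haC⟩ := Set.not_subset.mp hA₂C
      have haD : a ∈ D \ C := ⟨hDsplit ▸ Set.mem_union_right _ haA₂, haC⟩
      have := hsub' haD
      rcases this.1 with h | h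
      · exact hPnotD a h (hDsplit ▸ Set.mem_union_right _ haA₂)
      · exact hedisj a h haA₂
  · -- v on arc N₂ : Z₂ = P ∪ N₁ avoids v, new cycle D' = P ∪ N₂
    have hvZ₂ : v ∉ G.VSet (eset L' ∪ eset N₁) := by
      rw [hVZ₂]
      simp only [Set.mem_setOf_eq, mem_cons, map_append, mem_append]
      rintro (h | h | h)
      · exact hAv h.symm
      · exact hvL' h
      · have : v ∈ uA :: N₁.map Prod.snd :=
          hrevverts v (mem_cons_of_mem _ h)
        rcases mem_cons.mp this with h' | h'
        · exact hAv h'.symm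
        · rcases hvint v (mem_cons_of_mem _ h') (mem_cons_of_mem _ hv₂) with h'' | h''
          · exact hAv h''.symm
          · exact hBv h''.symm
    have hZ₂bal : eset L' ∪ eset N₁ ∈ Ω.Balanced := hbal _ hZ₂cyc hvZ₂
    have hDsplit' : D = eset N₂ ∪ eset N₁ := by rw [hDsplit, Set.union_comm]
    have hsd : symmDiff D (eset L' ∪ eset N₁) = eset L' ∪ eset N₂ :=
      symmDiff_helper hDsplit' (fun a h => hedisj a h.2 h.1) hPD'
    have hD'bal : eset L' ∪ eset N₂ ∈ Ω.Balanced :=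
      hθ.2 D (eset L' ∪ eset N₁) (eset L' ∪ eset N₂) hD hZ₂cyc hZ₁cyc hsd.symm hDbal hZ₂bal
    have heD' : e ∈ eset N₂ := by
      have : e ∈ eset N₁ ∪ eset N₂ := hDsplit ▸ heD
      rcases this with h | h
      · exact absurd ⟨e, Set.mem_union_right _ h, hve⟩ hvZ₂
      · exact h
    have hfD' : f ∈ eset N₂ := by
      have : f ∈ eset N₁ ∪ eset N₂ := hDsplit ▸ hfD
      rcases this with h | h
      · exact absurd ⟨f, Set.mem_union_right _ h, hvf⟩ hvZ₂
      · exact h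
    refine ⟨eset L' ∪ eset N₂, hZ₁cyc, Set.mem_union_right _ heD',
      Set.mem_union_right _ hfD', hD'bal, ?_⟩
    constructor
    · rintro a ⟨ha, haC⟩
      rcases ha with h | h
      · exact absurd (hPsubC h) haC
      · exact ⟨hDsplit ▸ Set.mem_union_right _ h, haC⟩
    · intro hsub'
      have hA₁C : ¬ (eset N₁ ⊆ C) := by
        intro hA₁C
        have hZ₂C : eset L' ∪ eset N₁ ⊆ C := Set.union_subset hPsubC hA₁C
        have := cycle_subset_eq hZ₂cyc hC hZ₂C
        rw [← this] at hvVC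
        exact hvZ₂ hvVC
      obtain ⟨a, haA₁, haC⟩ := Set.not_subset.mp hA₁C
      have haD : a ∈ D \ C := ⟨hDsplit ▸ Set.mem_union_left _ haA₁, haC⟩
      have := hsub' haD
      rcases this.1 with h | h
      · exact hPnotD a h (hDsplit ▸ Set.mem_union_left _ haA₁)
      · exact hedisj a haA₁ h

end BiasedGraph

end AuxWalks9
section AuxWalks10

open Classical List MultiGraph

namespace BiasedGraph

variable {V : Type u} {E : Type v} {Ω : BiasedGraph V E}

lemma balance_transfer (hθ : Ω.ThetaProperty) (v : V)
    (hbal : ∀ C : Set E, Ω.toMultiGraph.IsCycle C → v ∉ Ω.toMultiGraph.VSet C →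
      C ∈ Ω.Balanced)
    {e f : E} (hef : e ≠ f) (hle : Ω.toMultiGraph.IsLink e) (hlf : Ω.toMultiGraph.IsLink f)
    (hve : Ω.toMultiGraph.Inc v e) (hvf : Ω.toMultiGraph.Inc v f)
    {C D : Set E} (hC : Ω.toMultiGraph.IsCycle C) (hD : Ω.toMultiGraph.IsCycle D)
    (heC : e ∈ C) (hfC : f ∈ C) (heD : e ∈ D) (hfD : f ∈ D) (hDbal : D ∈ Ω.Balanced) :
    C ∈ Ω.Balanced := by
  suffices key : ∀ n (D : Set E), Ω.toMultiGraph.IsCycle D → e ∈ D → f ∈ D →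
      D ∈ Ω.Balanced → (D \ C).ncard = n → C ∈ Ω.Balanced by
    exact key _ D hD heD hfD hDbal rfl
  intro n
  induction n using Nat.strong_induction_on with
  | _ n ihn =>
  intro D hD heD hfD hDbal hn
  by_cases hsub : C ⊆ D
  · rw [cycle_subset_eq hC hD hsub]
    exact hDbal
  · obtain ⟨D', hD'cyc, heD', hfD', hD'bal, hss⟩ :=
      key_step hθ v hbal hef hle hlf hve hvf hC hD heC hfC heD hfD hDbal hsub
    have hfin : (D \ C).Finite := hD.1.subset Set.diff_subset
    have hlt : (D' \ C).ncard < n := hn ▸ Set.ncard_lt_ncard hss hfin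
    exact ihn _ hlt D' hD'cyc heD' hfD' hD'bal rfl

/-- Transitivity construction: from balanced cycles through `e,f` and `f,g` at `v`,
produce a balanced cycle through `e` and `g`. -/
lemma trans_witness (hθ : Ω.ThetaProperty) (v : V)
    (hbal : ∀ C : Set E, Ω.toMultiGraph.IsCycle C → v ∉ Ω.toMultiGraph.VSet C →
      C ∈ Ω.Balanced)
    {e f g : E} (hef : e ≠ f) (hfg : f ≠ g) (heg : e ≠ g)
    (hle : Ω.toMultiGraph.IsLink e) (hlf : Ω.toMultiGraph.IsLink f)
    (hlg : Ω.toMultiGraph.IsLink g)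
    (hve : Ω.toMultiGraph.Inc v e) (hvf : Ω.toMultiGraph.Inc v f)
    (hvg : Ω.toMultiGraph.Inc v g)
    {D₁ D₂ : Set E} (hD₁ : Ω.toMultiGraph.IsCycle D₁) (hD₂ : Ω.toMultiGraph.IsCycle D₂)
    (he₁ : e ∈ D₁) (hf₁ : f ∈ D₁) (hf₂ : f ∈ D₂) (hg₂ : g ∈ D₂)
    (hD₁bal : D₁ ∈ Ω.Balanced) (hD₂bal : D₂ ∈ Ω.Balanced) :
    ∃ W, W ∈ Ω.Balanced ∧ Ω.toMultiGraph.IsCycle W ∧ e ∈ W ∧ g ∈ W := by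
  set G := Ω.toMultiGraph with hG
  have hlfD₁ : ∀ h ∈ D₁, G.IsLink h := cycle_no_loop hD₁ he₁ hf₁ hef
  have hlfD₂ : ∀ h ∈ D₂, G.IsLink h := cycle_no_loop hD₂ hf₂ hg₂ hfg
  have hpair₁ : G.incSet D₁ v = {e, f} := cycle_incSet_pair hD₁ he₁ hf₁ hef hle hlf hve hvf
  have hpair₂ : G.incSet D₂ v = {f, g} := cycle_incSet_pair hD₂ hf₂ hg₂ hfg hlf hlg hvf hvg
  have hgD₁ : g ∉ D₁ := by
    intro hgD₁
    have : g ∈ G.incSet D₁ v := ⟨hgD₁, hvg⟩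
    rw [hpair₁] at this
    rcases this with h | h
    · exact heg h.symm
    · exact hfg h.symm
  have hvD₁ : v ∈ G.VSet D₁ := ⟨e, he₁, hve⟩
  -- traversal of D₂ from v via g
  obtain ⟨st, L, hcl, hesetD₂, hst1⟩ := exists_traversal hD₂ hlfD₂ hg₂ hvg
  obtain ⟨hwalkM, hMne, hendM, hndeM, hndvM⟩ := hcl
  set M := st :: L with hM
  -- the last edge of the traversal is f and its source lies in `VSet D₁`
  obtain ⟨M', stl, hMsplit⟩ : ∃ M' stl, M = M' ++ [stl] := by
    rcases List.eq_nil_or_concat M with h | ⟨M', stl, h⟩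
    · exact absurd h (by simp [hM])
    · exact ⟨M', stl, by simpa using h⟩
  have hM'ne : M' ≠ [] := by
    rintro rfl
    rw [nil_append, hM] at hMsplit
    obtain ⟨h1, h2⟩ := List.cons_eq_cons.mp hMsplit
    have hst2v : st.2 = v := by
      have := hendM
      rw [hM, h2] at this
      simpa using this
    have hwalk1 := hwalkM
    rw [hM, h2, isWalk_cons] at hwalk1
    apply hlg
    rw [← hst1]
    rcases hwalk1.1 with ⟨ha, hb⟩ | ⟨ha, hb⟩
    · rw [ha, hb, hst2v]
    · rw [ha, hb, hst2v]
  have hz' : wEnd v M' ∈ (M.map Prod.snd).dropLast := by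
    rw [hMsplit, map_append]
    rw [dropLast_append_of_ne_nil (by simp)]
    simp only [map_cons, map_nil, dropLast_singleton, append_nil]
    exact wEnd_mem_verts hM'ne
  have hstl1 : stl.1 ∈ G.incSet D₂ v := by
    refine ⟨by rw [← hesetD₂, hMsplit]; simp [eset], ?_⟩
    have hw := hwalkM
    rw [hMsplit, isWalk_append] at hw
    have h2 : stl.2 = v := by
      have := hendM
      rw [hMsplit, wEnd_append] at this
      simpa using this
    have := (inc_walk_fst hw.2).2
    rwa [h2] at this
  have hstlf : stl.1 = f := by
    rw [hpair₂] at hstl1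
    rcases hstl1 with h | h
    · exact h
    · -- stl.1 = g = st.1 contradicts Nodup of edges
      exfalso
      obtain ⟨M'', hM''⟩ : ∃ M'', M' = st :: M'' := by
        cases M' with
        | nil => exact absurd rfl hM'ne
        | cons a M'' =>
          have h1 : st :: L = a :: (M'' ++ [stl]) := by
            calc st :: L = M := hM.symm
            _ = (a :: M'') ++ [stl] := hMsplit
            _ = a :: (M'' ++ [stl]) := rfl
          exact ⟨M'', by rw [(List.cons_eq_cons.mp h1).1]⟩
      have hLdec' : L = M'' ++ [stl] := by
        have h2 : st :: L = st :: (M'' ++ [stl]) := by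
          calc st :: L = M := hM.symm
          _ = (st :: M'') ++ [stl] := by rw [hMsplit, hM'']
          _ = st :: (M'' ++ [stl]) := rfl
        exact (List.cons_eq_cons.mp h2).2
      have hmem : stl.1 ∈ L.map Prod.fst := by
        rw [hLdec']
        simp
      rw [hM, map_cons, nodup_cons] at hndeM
      exact hndeM.1 (by rw [hst1, ← h]; exact hmem)
  have hz'D₁ : wEnd v M' ∈ G.VSet D₁ := by
    refine ⟨f, hf₁, ?_⟩
    have hw := hwalkM
    rw [hMsplit, isWalk_append] at hw
    have := (inc_walk_fst hw.2).1
    rwa [hstlf] at this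
  -- first hit of VSet D₁ along the traversal
  obtain ⟨L₁, L₂, hLdec, hL₁ne, hu, hint⟩ :=
    first_hit (S := G.VSet D₁) hwalkM
      ⟨wEnd v M, by rw [hMsplit]; exact wEnd_mem_verts (by simp), by rw [hendM]; exact hvD₁⟩
  obtain ⟨u, hudef⟩ : ∃ u, u = wEnd v L₁ := ⟨_, rfl⟩
  rw [← hudef] at hu
  have hL₂ne : L₂ ≠ [] := by
    rintro rfl
    rw [append_nil] at hLdec
    rw [← hLdec] at hint
    exact hint _ hz' hz'D₁
  have hdlM : (M.map Prod.snd).dropLast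
      = L₁.map Prod.snd ++ (L₂.map Prod.snd).dropLast := by
    rw [hLdec, map_append, dropLast_append_of_ne_nil (by simpa using hL₂ne)]
  have hndvM' := hndvM
  rw [hdlM, nodup_cons] at hndvM'
  obtain ⟨hvnI, hndI⟩ := hndvM'
  have humem : u ∈ L₁.map Prod.snd := hudef ▸ wEnd_mem_verts hL₁ne
  have huv : u ≠ v := by
    rintro rfl
    exact hvnI (mem_append.mpr (Or.inl humem))
  -- Q := L₁ is an open simple walk from v to u avoiding D₁
  have hwalkL₁ : G.IsWalk v L₁ := by
    have := hwalkM
    rw [hLdec, isWalk_append] at this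
    exact this.1
  have hoswQ : G.OpenSW v L₁ := by
    refine ⟨hwalkL₁, hL₁ne, ?_, ?_⟩
    · rw [nodup_cons]
      exact ⟨fun hm => hvnI (mem_append.mpr (Or.inl hm)),
        hndI.sublist (sublist_append_left _ _)⟩
    · have : M.map Prod.fst = L₁.map Prod.fst ++ L₂.map Prod.fst := by
        rw [hLdec, map_append]
      rw [this] at hndeM
      exact hndeM.sublist (sublist_append_left _ _)
  obtain ⟨L₁', hL₁dec⟩ : ∃ L₁', L₁ = st :: L₁' := by
    cases hc : L₁ with
    | nil => exact absurd hc hL₁ne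
    | cons a L₁' =>
      have h1 : st :: L = a :: (L₁' ++ L₂) := by
        calc st :: L = M := hM.symm
        _ = (a :: L₁') ++ L₂ := by rw [hLdec, hc]
        _ = a :: (L₁' ++ L₂) := rfl
      exact ⟨L₁', by rw [(List.cons_eq_cons.mp h1).1]⟩
  have hgQ : g ∈ eset L₁ := by
    rw [hL₁dec]
    simp [eset, ← hst1]
  have hQnotD₁ : ∀ a ∈ eset (V := V) L₁, a ∉ D₁ := by
    intro a ha
    rw [hL₁dec] at ha
    simp only [mem_eset, map_cons, mem_cons] at ha
    rcases ha with rfl | ha'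
    · rw [hst1]; exact hgD₁
    · have hL₁'ne : L₁' ≠ [] := by
        rintro rfl
        simp at ha'
      have hwalkL₁' : G.IsWalk st.2 L₁' := by
        rw [hL₁dec, isWalk_cons] at hwalkL₁
        exact hwalkL₁.2
      have hintL₁ : ∀ x ∈ (L₁.map Prod.snd).dropLast, x ∉ G.VSet D₁ := hint
      rw [hL₁dec, map_cons, dropLast_cons_of_ne_nil (by simpa using hL₁'ne)] at hintL₁
      have hst2 : st.2 ∉ G.VSet D₁ := hintL₁ st.2 mem_cons_self
      obtain ⟨stx, hstx, rfl⟩ := List.mem_map.mp ha'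
      exact edges_not_in hwalkL₁' hst2
        (fun x hx => hintL₁ x (mem_cons_of_mem _ hx)) stx hstx
  -- traversal of D₁ from v via e and split at u
  obtain ⟨stD, LD, hclD, hesetD₁, hstD1⟩ := exists_traversal hD₁ hlfD₁ he₁ hve
  have hVD₁eq : G.VSet D₁ = {x | x ∈ v :: (stD :: LD).map Prod.snd} := by
    rw [← hesetD₁]
    exact VSet_eset hclD.1 (by simp)
  have humemD : u ∈ (stD :: LD).map Prod.snd := by
    have := hu
    rw [hVD₁eq] at this
    simp only [Set.mem_setOf_eq, mem_cons] at this
    rcases this with h | h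
    · exact absurd h huv
    · exact h
  obtain ⟨M₁, M₂, hMdec, hoswM₁, hoswM₂, hendM₁, hendM₂, hvintD, hedisjD⟩ :=
    split_closedSW hclD humemD huv
  have hD₁split : D₁ = eset M₁ ∪ eset M₂ := by
    rw [← hesetD₁, hMdec, eset_append]
  have heM₁ : e ∈ eset M₁ := by
    cases M₁ with
    | nil => exact absurd rfl hoswM₁.2.1
    | cons a M₁' =>
      have : a = stD := by
        have h1 : a :: (M₁' ++ M₂) = stD :: LD := by
          rw [← cons_append, ← hMdec]
        exact (List.cons_eq_cons.mp h1).1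
      rw [← hstD1, this]
      simp [eset]
  have hfM₂ : f ∈ eset M₂ := by
    have hfD₁' : f ∈ eset M₁ ∪ eset M₂ := hD₁split ▸ hf₁
    rcases hfD₁' with h | h
    · exfalso
      have hdeg := hoswM₁.deg_start
      have := incSet_subsingleton_of_deg_le_one (eset_finite M₁) (le_of_eq hdeg)
        ⟨heM₁, hve⟩ ⟨h, hvf⟩
      exact hef this
    · exact h
  -- vertex subsets of the arcs
  have hvertsM₁ : ∀ a, a ∈ v :: M₁.map Prod.snd → a ∈ G.VSet D₁ := by
    intro a ha
    rw [hVD₁eq]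
    rcases mem_cons.mp ha with rfl | h
    · simp
    · simp only [Set.mem_setOf_eq, mem_cons]
      right
      rw [hMdec, map_append, mem_append]
      exact Or.inl h
  have hvertsM₂ : ∀ a, a ∈ u :: M₂.map Prod.snd → a ∈ G.VSet D₁ := by
    intro a ha
    rcases mem_cons.mp ha with rfl | h
    · exact hu
    · rw [hVD₁eq]
      simp only [Set.mem_setOf_eq, mem_cons]
      right
      rw [hMdec, map_append, mem_append]
      exact Or.inr h
  have hQvert : ∀ a ∈ L₁.map Prod.snd, a = u ∨ a ∉ G.VSet D₁ := by
    intro a ha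
    have hsplit : L₁.map Prod.snd = (L₁.map Prod.snd).dropLast ++ [u] := by
      rw [hudef]
      exact map_snd_eq_dropLast hL₁ne
    rw [hsplit] at ha
    rcases mem_append.mp ha with h | h
    · exact Or.inr (hint a h)
    · rw [List.mem_singleton] at h
      exact Or.inl h
  -- W' = Q ∪ M₂ (cycle through f, g at v)
  have hW'cl : G.ClosedSW v (L₁ ++ M₂) := by
    refine join_closedSW hoswQ hoswM₂ hudef.symm hendM₂ (Ne.symm huv) ?_ ?_
    · intro a ha hb
      have hbD : a ∈ G.VSet D₁ := hvertsM₂ a hb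
      rcases mem_cons.mp ha with rfl | h
      · exact Or.inl rfl
      · rcases hQvert a h with rfl | h'
        · exact Or.inr rfl
        · exact absurd hbD h'
    · intro a ha hb
      exact hQnotD₁ a ha (hD₁split ▸ Set.mem_union_right _ hb)
  -- W = Q ∪ M₁ (cycle through e, g at v)
  have hrevM₁ : G.OpenSW u (wRev v M₁) := by
    have := hoswM₁.rev
    rwa [hendM₁] at this
  have hrevendM₁ : wEnd u (wRev v M₁) = v := by
    have := wRev_wEnd v M₁
    rwa [hendM₁] at this
  have hrevvertsM₁ : ∀ a, a ∈ u :: (wRev v M₁).map Prod.snd → a ∈ v :: M₁.map Prod.snd := by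
    intro a ha
    rw [← hendM₁] at ha
    exact (mem_verts_wRev hoswM₁.2.1).mp ha
  have hWcl : G.ClosedSW v (L₁ ++ wRev v M₁) := by
    refine join_closedSW hoswQ hrevM₁ hudef.symm hrevendM₁ (Ne.symm huv) ?_ ?_
    · intro a ha hb
      have hbD : a ∈ G.VSet D₁ := hvertsM₁ a (hrevvertsM₁ a hb)
      rcases mem_cons.mp ha with rfl | h
      · exact Or.inl rfl
      · rcases hQvert a h with rfl | h'
        · exact Or.inr rfl
        · exact absurd hbD h'
    · intro a ha hb
      rw [wRev_eset] at hb
      exact hQnotD₁ a ha (hD₁split ▸ Set.mem_union_left _ hb)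
  have hW'cyc : G.IsCycle (eset L₁ ∪ eset M₂) := by
    have := hW'cl.isCycle
    rwa [eset_append] at this
  have hWcyc : G.IsCycle (eset L₁ ∪ eset M₁) := by
    have := hWcl.isCycle
    rwa [eset_append, wRev_eset] at this
  -- W' is balanced by transfer from D₂ (both contain f and g at v)
  have hW'bal : eset L₁ ∪ eset M₂ ∈ Ω.Balanced := by
    refine balance_transfer hθ v hbal hfg hlf hlg hvf hvg hW'cyc hD₂
      (Set.mem_union_right _ hfM₂) (Set.mem_union_left _ hgQ) hf₂ hg₂ hD₂bal
  -- W = D₁ △ W', hence balanced by the theta property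
  have hsd : symmDiff D₁ (eset L₁ ∪ eset M₂) = eset L₁ ∪ eset M₁ :=
    symmDiff_helper hD₁split (fun a h => hedisjD a h.1 h.2) hQnotD₁
  have hWbal : eset L₁ ∪ eset M₁ ∈ Ω.Balanced :=
    hθ.2 D₁ (eset L₁ ∪ eset M₂) (eset L₁ ∪ eset M₁) hD₁ hW'cyc hWcyc hsd.symm hD₁bal hW'bal
  exact ⟨eset L₁ ∪ eset M₁, hWbal, hWcyc, Set.mem_union_right _ heM₁,
    Set.mem_union_left _ hgQ⟩

end BiasedGraph

end AuxWalks10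
theorem stmt_6 {V E : Type*} (Ω : BiasedGraph V E) (hθ : Ω.ThetaProperty) (v : V)
    (hbal : ∀ C : Set E, Ω.toMultiGraph.IsCycle C → v ∉ Ω.toMultiGraph.VSet C → C ∈ Ω.Balanced) :
    (Equivalence (fun e f : {e : E // Ω.toMultiGraph.IsLink e ∧ Ω.toMultiGraph.Inc v e} =>
        e = f ∨ ∃ C ∈ Ω.Balanced, Ω.toMultiGraph.IsCycle C ∧ e.1 ∈ C ∧ f.1 ∈ C)) ∧
    ∀ C : Set E, Ω.toMultiGraph.IsCycle C → v ∈ Ω.toMultiGraph.VSet C →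
      ∀ e f : E, e ∈ C → f ∈ C → e ≠ f →
        Ω.toMultiGraph.IsLink e → Ω.toMultiGraph.IsLink f → Ω.toMultiGraph.Inc v e → Ω.toMultiGraph.Inc v f →
        (C ∈ Ω.Balanced ↔
          (e = f ∨ ∃ D ∈ Ω.Balanced, Ω.toMultiGraph.IsCycle D ∧ e ∈ D ∧ f ∈ D)) := by
  classical
  constructor
  · refine ⟨fun x => Or.inl rfl, ?_, ?_⟩
    · rintro x y (h | ⟨C, hCb, hCc, hx, hy⟩)
      · exact Or.inl h.symm
      · exact Or.inr ⟨C, hCb, hCc, hy, hx⟩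
    · rintro x y z hxy hyz
      by_cases hxz : x = z
      · exact Or.inl hxz
      rcases hxy with h | ⟨D₁, hD₁b, hD₁c, hx1, hy1⟩
      · rw [h]; exact hyz
      rcases hyz with h | ⟨D₂, hD₂b, hD₂c, hy2, hz2⟩
      · exact Or.inr ⟨D₁, hD₁b, hD₁c, hx1, h ▸ hy1⟩
      by_cases hxy' : x = y
      · exact Or.inr ⟨D₂, hD₂b, hD₂c, by rw [hxy']; exact hy2, hz2⟩
      by_cases hyz' : y = z
      · exact Or.inr ⟨D₁, hD₁b, hD₁c, hx1, hyz' ▸ hy1⟩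
      have hvne : x.1 ≠ y.1 := fun h => hxy' (Subtype.ext h)
      have hvne2 : y.1 ≠ z.1 := fun h => hyz' (Subtype.ext h)
      have hvne3 : x.1 ≠ z.1 := fun h => hxz (Subtype.ext h)
      obtain ⟨W, hWb, hWc, hxW, hzW⟩ := BiasedGraph.trans_witness hθ v hbal hvne hvne2 hvne3
        x.2.1 y.2.1 z.2.1 x.2.2 y.2.2 z.2.2 hD₁c hD₂c hx1 hy1 hy2 hz2 hD₁b hD₂b
      exact Or.inr ⟨W, hWb, hWc, hxW, hzW⟩
  · intro C hC hvC e f heC hfC hef hle hlf hve hvf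
    constructor
    · intro hCbal
      exact Or.inr ⟨C, hCbal, hC, heC, hfC⟩
    · rintro (h | ⟨D, hDb, hDc, heD, hfD⟩)
      · exact absurd h hef
      · exact BiasedGraph.balance_transfer hθ v hbal hef hle hlf hve hvf hC hDc heC hfC heD
          hfD hDb
end

section
/- Let Ω be a biased graph with connected underlying graph whose frame matroid F(Ω) is connected, and let (X, Y) be a 1-separation of F(Ω) such that both Ω[X] and Ω[Y] are connected subgraphs. If Ω is unbalanced, then either λ_Ω(X,Y) = 1 and exactly one of Ω[X], Ω[Y] is balanced, or λ_Ω(X,Y) = 2 and both Ω[X] and Ω[Y] are balanced. -/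
open Set

/-! ### Biased graph core -/

universe u v

/-- The number of balanced components of the subgraph induced by `X`. -/
noncomputable def BiasedGraph.numBal {V E : Type*} (Ω : BiasedGraph V E) (X : Set E) : ℕ :=
  {C : Set E | Ω.toMultiGraph.IsComponentOf C X ∧ Ω.BalancedOn C}.ncard

/-- The rank of an edge set in the frame matroid of `Ω`. -/
noncomputable def BiasedGraph.rk {V E : Type*} (Ω : BiasedGraph V E) (X : Set E) : ℤ :=
  ((Ω.toMultiGraph.VSet X).ncard : ℤ) - Ω.numBal X

lemma connected_component_eq {V E : Type*} (G : MultiGraph V E) {X : Set E}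
    (hc : G.ConnectedOn X) {C : Set E} (h : G.IsComponentOf C X) : C = X := by
  obtain ⟨e, he, rfl⟩ := h
  ext f
  simp only [Set.mem_setOf_eq]
  exact ⟨fun h => h.1, fun hf => ⟨hf, hc he hf⟩⟩

lemma isComponentOf_self {V E : Type*} (G : MultiGraph V E) {X : Set E}
    (hc : G.ConnectedOn X) (hne : X.Nonempty) : G.IsComponentOf X X := by
  obtain ⟨e, he⟩ := hne
  refine ⟨e, he, ?_⟩
  ext f
  simp only [Set.mem_setOf_eq]
  exact ⟨fun hf => ⟨hf, hc he hf⟩, fun h => h.1⟩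

lemma numBal_of_balanced {V E : Type*} (Ω : BiasedGraph V E) {X : Set E}
    (hc : Ω.toMultiGraph.ConnectedOn X) (hne : X.Nonempty) (hb : Ω.BalancedOn X) :
    Ω.numBal X = 1 := by
  unfold BiasedGraph.numBal
  have hset : {C : Set E | Ω.toMultiGraph.IsComponentOf C X ∧ Ω.BalancedOn C} = {X} := by
      ext C
      simp only [Set.mem_setOf_eq, Set.mem_singleton_iff]
      constructor
      · exact fun h => connected_component_eq _ hc h.1
      · rintro rfl; exact ⟨isComponentOf_self _ hc hne, hb⟩
  rw [hset, Set.ncard_singleton]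

lemma numBal_of_unbalanced {V E : Type*} (Ω : BiasedGraph V E) {X : Set E}
    (hc : Ω.toMultiGraph.ConnectedOn X) (hne : X.Nonempty) (hb : ¬ Ω.BalancedOn X) :
    Ω.numBal X = 0 := by
  unfold BiasedGraph.numBal
  have hset : {C : Set E | Ω.toMultiGraph.IsComponentOf C X ∧ Ω.BalancedOn C} = ∅ := by
      ext C
      simp only [Set.mem_setOf_eq, Set.mem_empty_iff_false, iff_false, not_and]
      intro h1 h2
      exact hb (connected_component_eq _ hc h1 ▸ h2)
  rw [hset, Set.ncard_empty]

lemma exists_cross_vertex {V E : Type*} (G : MultiGraph V E) {X Y : Set E}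
    (hXY : X ∪ Y = Set.univ) (hd : Disjoint X Y) {e f : E} (he : e ∈ X) (hf : f ∈ Y)
    (h : Relation.ReflTransGen (G.EdgeAdj Set.univ) e f) :
    ∃ v, v ∈ G.VSet X ∩ G.VSet Y := by
  have key : ∀ g, Relation.ReflTransGen (G.EdgeAdj Set.univ) e g → g ∈ Y →
      ∃ v, v ∈ G.VSet X ∩ G.VSet Y := by
    intro g hrt
    induction hrt with
    | refl => intro hg; exact absurd hg (Set.disjoint_left.mp hd he)
    | @tail b c _ hadj ih =>
      intro hc
      by_cases hb : b ∈ Y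
      · exact ih hb
      · have hbX : b ∈ X := (hXY ▸ Set.mem_univ b : b ∈ X ∪ Y).resolve_right hb
        obtain ⟨-, -, v, hv1, hv2⟩ := hadj
        exact ⟨v, ⟨b, hbX, hv1⟩, ⟨c, hc, hv2⟩⟩
  exact key f h hf

theorem stmt_9 {V E : Type*} [Finite V] [Finite E] (Ω : BiasedGraph V E)
    (hθ : Ω.ThetaProperty)
    (hconn : Ω.toMultiGraph.ConnectedOn Set.univ)
    (hunb : ∃ C : Set E, Ω.toMultiGraph.IsCycle C ∧ C ∉ Ω.Balanced)
    (X Y : Set E) (hXY : X ∪ Y = Set.univ) (hd : Disjoint X Y)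
    (hXne : X.Nonempty) (hYne : Y.Nonempty)
    (hsep : Ω.rk X + Ω.rk Y = Ω.rk Set.univ)
    (hXc : Ω.toMultiGraph.ConnectedOn X) (hYc : Ω.toMultiGraph.ConnectedOn Y) :
    (((Ω.toMultiGraph.VSet X ∩ Ω.toMultiGraph.VSet Y).ncard = 1 ∧ (Ω.BalancedOn X ↔ ¬ Ω.BalancedOn Y)) ∨
     ((Ω.toMultiGraph.VSet X ∩ Ω.toMultiGraph.VSet Y).ncard = 2 ∧ Ω.BalancedOn X ∧ Ω.BalancedOn Y)) := by
  classical
  have hEne : (Set.univ : Set E).Nonempty := ⟨hXne.choose, trivial⟩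
  have hnbU : ¬ Ω.BalancedOn Set.univ := by
    obtain ⟨C, hC, hCb⟩ := hunb
    exact fun h => hCb (h C (Set.subset_univ C) hC)
  have hnumU : Ω.numBal Set.univ = 0 := numBal_of_unbalanced Ω hconn hEne hnbU
  have hVU : Ω.toMultiGraph.VSet Set.univ
      = Ω.toMultiGraph.VSet X ∪ Ω.toMultiGraph.VSet Y := by
    rw [← hXY]
    ext v
    simp only [MultiGraph.VSet, Set.mem_setOf_eq, Set.mem_union]
    constructor
    · rintro ⟨e, he | he, hv⟩
      · exact Or.inl ⟨e, he, hv⟩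
      · exact Or.inr ⟨e, he, hv⟩
    · rintro (⟨e, he, hv⟩ | ⟨e, he, hv⟩)
      · exact ⟨e, Or.inl he, hv⟩
      · exact ⟨e, Or.inr he, hv⟩
  have hcard : (Ω.toMultiGraph.VSet X ∪ Ω.toMultiGraph.VSet Y).ncard
      + (Ω.toMultiGraph.VSet X ∩ Ω.toMultiGraph.VSet Y).ncard
      = (Ω.toMultiGraph.VSet X).ncard + (Ω.toMultiGraph.VSet Y).ncard :=
    Set.ncard_union_add_ncard_inter _ _ (Set.toFinite _) (Set.toFinite _)
  unfold BiasedGraph.rk at hsep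
  rw [hnumU, hVU] at hsep
  by_cases hbX : Ω.BalancedOn X <;> by_cases hbY : Ω.BalancedOn Y
  · right
    rw [numBal_of_balanced Ω hXc hXne hbX, numBal_of_balanced Ω hYc hYne hbY] at hsep
    exact ⟨by omega, hbX, hbY⟩
  · left
    rw [numBal_of_balanced Ω hXc hXne hbX, numBal_of_unbalanced Ω hYc hYne hbY] at hsep
    exact ⟨by omega, by tauto⟩
  · left
    rw [numBal_of_unbalanced Ω hXc hXne hbX, numBal_of_balanced Ω hYc hYne hbY] at hsep
    exact ⟨by omega, by tauto⟩
  · exfalso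
    rw [numBal_of_unbalanced Ω hXc hXne hbX, numBal_of_unbalanced Ω hYc hYne hbY] at hsep
    have hkey : (Ω.toMultiGraph.VSet X ∩ Ω.toMultiGraph.VSet Y).ncard = 0 := by omega
    have hempty : Ω.toMultiGraph.VSet X ∩ Ω.toMultiGraph.VSet Y = ∅ :=
      (Set.ncard_eq_zero (Set.toFinite _)).mp hkey
    obtain ⟨e, he⟩ := hXne
    obtain ⟨f, hf⟩ := hYne
    obtain ⟨v, hv⟩ := exists_cross_vertex Ω.toMultiGraph hXY hd he hf
      (hconn trivial trivial)
    rw [hempty] at hv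
    exact hv
end

section
/- Let M be a connected matroid on ground set E with |E| ≥ 6 such that for every 2-separation (A, Aᶜ) of M, one of the restrictions M|A or M|Aᶜ is a circuit of size 3. If (A, Aᶜ) and (B, Bᶜ) are 2-separations with both M|A and M|B circuits of size 3, then either A = B or A ∩ B = ∅. -/
open Set

/-! ### Biased graph core -/

universe u v

/-- A 2-separation of a matroid: both sides have at least two elements and
`r(A) + r(E \ A) = r(E) + 1` (i.e. the separation has order 2). -/
def Matroid.TwoSep {α : Type*} (M : Matroid α) (A : Set α) : Prop :=
  A ⊆ M.E ∧ 2 ≤ A.encard ∧ 2 ≤ (M.E \ A).encard ∧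
    M.eRk' A + M.eRk' (M.E \ A) = M.eRk' M.E + 1

namespace Matroid
variable {α : Type*} {M : Matroid α} {I J X Y C : Set α} {e : α}


lemma le_eRk'' (hI : M.Indep I) (hIX : I ⊆ X) : I.encard ≤ M.eRk' X :=
  le_iSup (fun I : {I : Set α // M.Indep I ∧ I ⊆ X} => I.1.encard) ⟨I, hI, hIX⟩

lemma eRk'_mono' (h : X ⊆ Y) : M.eRk' X ≤ M.eRk' Y :=
  iSup_le fun I => le_eRk'' I.2.1 (I.2.2.trans h)

lemma IsBasis'.eRk'_eq (hI : M.IsBasis' I X) : M.eRk' X = I.encard := by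
  refine le_antisymm (iSup_le fun J => ?_) (le_eRk'' hI.indep hI.subset)
  obtain ⟨J', hJ', hJJ'⟩ := J.2.1.subset_isBasis'_of_subset J.2.2
  exact (encard_mono hJJ').trans (hJ'.encard_eq_encard hI).le

lemma Indep.eRk'_eq (hI : M.Indep I) : M.eRk' I = I.encard :=
  (hI.isBasis_self.isBasis').eRk'_eq

lemma eRk'_le_encard (M : Matroid α) (X : Set α) : M.eRk' X ≤ X.encard := by
  obtain ⟨I, hI⟩ := M.exists_isBasis' X
  rw [hI.eRk'_eq]; exact encard_mono hI.subset

lemma eRk'_lt_top (M : Matroid α) [M.Finite] (X : Set α) : M.eRk' X < ⊤ := by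
  obtain ⟨I, hI⟩ := M.exists_isBasis' X
  rw [hI.eRk'_eq]
  exact (M.set_finite I hI.indep.subset_ground).encard_lt_top

lemma eRk'_le_of_subset_closure (h : X ⊆ M.closure Y) : M.eRk' X ≤ M.eRk' Y := by
  obtain ⟨I, hI⟩ := M.exists_isBasis' Y
  calc M.eRk' X ≤ M.eRk' (M.closure Y) := eRk'_mono' h
  _ = I.encard := hI.isBasis_closure_right.isBasis'.eRk'_eq
  _ = M.eRk' Y := hI.eRk'_eq.symm

lemma eRk'_submod (M : Matroid α) (X Y : Set α) :
    M.eRk' (X ∩ Y) + M.eRk' (X ∪ Y) ≤ M.eRk' X + M.eRk' Y := by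
  obtain ⟨I, hI⟩ := M.exists_isBasis' (X ∩ Y)
  obtain ⟨J, hJ, hIJ⟩ := hI.indep.subset_isBasis'_of_subset
    (hI.subset.trans (inter_subset_left.trans subset_union_left))
  rw [hI.eRk'_eq, hJ.eRk'_eq]
  have h1 : (J ∩ X).encard ≤ M.eRk' X :=
    le_eRk'' (hJ.indep.subset inter_subset_left) inter_subset_right
  have h2 : (J ∩ Y).encard ≤ M.eRk' Y :=
    le_eRk'' (hJ.indep.subset inter_subset_left) inter_subset_right
  have hu : (J ∩ X) ∪ (J ∩ Y) = J := by
    rw [← inter_union_distrib_left]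
    exact inter_eq_self_of_subset_left hJ.subset
  have hkey := encard_union_add_encard_inter (J ∩ X) (J ∩ Y)
  rw [hu] at hkey
  have hIsub : I ⊆ (J ∩ X) ∩ (J ∩ Y) := fun x hx =>
    ⟨⟨hIJ hx, (hI.subset hx).1⟩, hIJ hx, (hI.subset hx).2⟩
  calc I.encard + J.encard ≤ ((J ∩ X) ∩ (J ∩ Y)).encard + J.encard :=
        add_le_add_left (encard_mono hIsub) _
  _ = J.encard + ((J ∩ X) ∩ (J ∩ Y)).encard := add_comm _ _
  _ = (J ∩ X).encard + (J ∩ Y).encard := hkey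
  _ ≤ M.eRk' X + M.eRk' Y := add_le_add h1 h2

lemma Circuit'.subset_ground' (hC : M.Circuit' C) : C ⊆ M.E := hC.1.subset_ground

lemma Circuit'.diff_singleton_indep' (hC : M.Circuit' C) (he : e ∈ C) :
    M.Indep (C \ {e}) :=
  hC.2 _ ⟨diff_subset, fun h => ((h he).2 rfl)⟩

lemma Circuit'.mem_closure' (hC : M.Circuit' C) (he : e ∈ C) :
    e ∈ M.closure (C \ {e}) := by
  by_contra h
  have hI := hC.diff_singleton_indep' he
  have : M.Indep (insert e (C \ {e})) := by
    rw [hI.insert_indep_iff_of_notMem (by simp)]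
    exact ⟨hC.subset_ground' he, h⟩
  rw [insert_diff_singleton, insert_eq_of_mem he] at this
  exact hC.1.not_indep this

lemma Circuit'.eRk'_of_three (hC : M.Circuit' C) (hfin : C.Finite)
    (h3 : C.encard = 3) : M.eRk' C = 2 := by
  obtain ⟨D, hDC, hD2⟩ := exists_subset_encard_eq (show (2:ℕ∞) ≤ C.encard by rw [h3]; norm_num)
  have hDne : D ≠ C := fun h => by rw [h, h3] at hD2; norm_num at hD2
  have hDind : M.Indep D := hC.2 _ ⟨hDC, fun h => hDne (hDC.antisymm h)⟩
  refine le_antisymm ?_ ?_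
  · obtain ⟨I, hI⟩ := M.exists_isBasis' C
    rw [hI.eRk'_eq]
    have hIne : I ≠ C := fun h => hC.1.not_indep (h ▸ hI.indep)
    have : I.encard + 1 ≤ C.encard := by
      have hss : I ⊂ C := ⟨hI.subset, fun h => hIne (hI.subset.antisymm h)⟩
      obtain ⟨x, hxC, hxI⟩ := exists_of_ssubset hss
      calc I.encard + 1 = (insert x I).encard := (encard_insert_of_notMem hxI).symm
      _ ≤ C.encard := encard_mono (insert_subset hxC hI.subset)
    rw [h3, (by norm_num : (3:ℕ∞) = 2 + 1)] at this
    exact (WithTop.add_le_add_iff_right ENat.one_ne_top).1 this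
  · rw [← hD2]; exact le_eRk'' hDind hDC


lemma conn_lower [M.Finite] (hconn : M.Connected') (X : Set α) (hX : X ⊆ M.E)
    (hne : X.Nonempty) (hne' : (M.E \ X).Nonempty) :
    M.eRk' M.E + 1 ≤ M.eRk' X + M.eRk' (M.E \ X) := by
  by_contra hlt
  push_neg at hlt
  have hle : M.eRk' X + M.eRk' (M.E \ X) ≤ M.eRk' M.E := Order.le_of_lt_add_one hlt
  obtain ⟨e, he⟩ := hne
  obtain ⟨f, hf⟩ := hne'
  have hef : e ≠ f := fun h => hf.2 (h ▸ he)
  obtain ⟨K, hK, heK, hfK⟩ := hconn.2 e (hX he) f hf.1 hef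
  have hKE : K ⊆ M.E := hK.subset_ground'
  have h1 : M.Indep (K ∩ X) := hK.2 _ ⟨inter_subset_left, fun h => hf.2 (h hfK).2⟩
  have h2 : M.Indep (K \ X) := hK.2 _ ⟨diff_subset, fun h => (h heK).2 he⟩
  obtain ⟨I, hI, hKI⟩ := h1.subset_isBasis_of_subset inter_subset_right hX
  obtain ⟨J, hJ, hKJ⟩ := h2.subset_isBasis_of_subset (diff_subset_diff_left hKE) diff_subset
  have hIJE : I ∪ J ⊆ M.E := union_subset hI.indep.subset_ground hJ.indep.subset_ground
  have hsp : M.E ⊆ M.closure (I ∪ J) := by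
    intro x hx
    by_cases hxX : x ∈ X
    · exact M.closure_subset_closure subset_union_left (hI.subset_closure hxX)
    · exact M.closure_subset_closure subset_union_right (hJ.subset_closure ⟨hx, hxX⟩)
  have hr : M.eRk' (I ∪ J) = M.eRk' M.E :=
    le_antisymm (eRk'_mono' hIJE) (eRk'_le_of_subset_closure hsp)
  have hencard : (I ∪ J).encard ≤ M.eRk' M.E := by
    calc (I ∪ J).encard ≤ I.encard + J.encard := encard_union_le _ _
    _ = M.eRk' X + M.eRk' (M.E \ X) := by rw [hI.isBasis'.eRk'_eq, hJ.isBasis'.eRk'_eq]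
    _ ≤ M.eRk' M.E := hle
  obtain ⟨B, hB⟩ := M.exists_isBasis' (I ∪ J)
  have hBfin : (I ∪ J).Finite := M.set_finite _ hIJE
  have hBeq : B = I ∪ J := by
    apply (hBfin.subset hB.subset).eq_of_subset_of_encard_le hB.subset
    rw [← hB.eRk'_eq, hr]; exact hencard
  have hIJind : M.Indep (I ∪ J) := hBeq ▸ hB.indep
  have hKsub : K ⊆ I ∪ J := by
    intro x hx
    by_cases hxX : x ∈ X
    · exact Or.inl (hKI ⟨hx, hxX⟩)
    · exact Or.inr (hKJ ⟨hx, hxX⟩)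
  exact hK.1.not_indep (hIJind.subset hKsub)

end Matroid

theorem stmt_11 {α : Type*} (M : Matroid α) [M.Finite] (hconn : M.Connected')
    (hcard : 6 ≤ M.E.encard)
    (h3 : ∀ A : Set α, M.TwoSep A →
      (M.Circuit' A ∧ A.encard = 3) ∨ (M.Circuit' (M.E \ A) ∧ (M.E \ A).encard = 3))
    (A B : Set α) (hA : M.TwoSep A) (hB : M.TwoSep B)
    (hA3 : M.Circuit' A ∧ A.encard = 3) (hB3 : M.Circuit' B ∧ B.encard = 3) :
    A = B ∨ A ∩ B = ∅ := by
  classical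
  by_contra hcon
  push_neg at hcon
  obtain ⟨hne, hPne⟩ := hcon
  obtain ⟨hAsub, hA2, hAc2, hAr⟩ := hA
  obtain ⟨hBsub, hB2, hBc2, hBr⟩ := hB
  obtain ⟨hAcirc, hAcard⟩ := hA3
  obtain ⟨hBcirc, hBcard⟩ := hB3
  have hEfin : M.E.Finite := M.ground_finite
  have hAfin : A.Finite := hEfin.subset hAsub
  have hBfin : B.Finite := hEfin.subset hBsub
  have hrA : M.eRk' A = 2 := hAcirc.eRk'_of_three hAfin hAcard
  have hrB : M.eRk' B = 2 := hBcirc.eRk'_of_three hBfin hBcard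
  have hPA : A ∩ B ⊂ A := by
    refine ⟨inter_subset_left, fun hsub => ?_⟩
    have hAB : A ⊆ B := fun x hx => (hsub hx).2
    exact hne (hAfin.eq_of_subset_of_encard_le hAB (by rw [hAcard, hBcard]))
  have hPind : M.Indep (A ∩ B) := hAcirc.2 _ hPA
  have hPfin : (A ∩ B).Finite := hAfin.subset inter_subset_left
  obtain ⟨k, hk⟩ : ∃ n : ℕ, (A ∩ B).encard = (n : ℕ∞) :=
    ⟨_, (ENat.coe_toNat hPfin.encard_lt_top.ne).symm⟩
  have hk1 : (1 : ℕ∞) ≤ (k : ℕ∞) := by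
    rw [← hk]; exact one_le_encard_iff_nonempty.2 hPne
  have hk3 : (k : ℕ∞) ≤ 3 := by
    rw [← hk, ← hAcard]; exact encard_mono hPA.1
  have hkne3 : k ≠ 3 := by
    intro h
    have h3' : (A ∩ B).encard = 3 := by rw [hk, h]; rfl
    have heq : A ∩ B = A := hPfin.eq_of_subset_of_encard_le hPA.1 (by rw [hAcard, h3'])
    exact hPA.2 (by rw [heq])
  have hk1' : 1 ≤ k := by exact_mod_cast hk1
  have hk3' : k ≤ 3 := by exact_mod_cast hk3
  have hk12 : k = 1 ∨ k = 2 := by omega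
  rcases hk12 with hk12 | hk12
  · -- |A ∩ B| = 1
    have hP1 : (A ∩ B).encard = 1 := by rw [hk, hk12]; rfl
    obtain ⟨e, hP⟩ := encard_eq_one.1 hP1
    have heP : e ∈ A ∩ B := by rw [hP]; exact rfl
    have heA : e ∈ A := heP.1
    have heB : e ∈ B := heP.2
    have hsubEB : A \ {e} ⊆ M.E \ B := by
      rintro x ⟨hxA, hxe⟩
      refine ⟨hAsub hxA, fun hxB => hxe ?_⟩
      have hx : x ∈ A ∩ B := ⟨hxA, hxB⟩
      rw [hP] at hx; exact hx
    have hecl : e ∈ M.closure (M.E \ B) :=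
      M.closure_subset_closure hsubEB (hAcirc.mem_closure' heA)
    have hES : M.E \ (B \ {e}) = insert e (M.E \ B) := by
      ext x
      constructor
      · rintro ⟨hxE, hx⟩
        by_cases hxB : x ∈ B
        · left
          by_contra hxe
          exact hx ⟨hxB, hxe⟩
        · right; exact ⟨hxE, hxB⟩
      · rintro (rfl | ⟨hxE, hxB⟩)
        · exact ⟨hAsub heA, fun h => h.2 rfl⟩
        · exact ⟨hxE, fun h => hxB h.1⟩
    have hrES : M.eRk' (M.E \ (B \ {e})) = M.eRk' (M.E \ B) := by
      refine le_antisymm ?_ (Matroid.eRk'_mono' (diff_subset_diff_right diff_subset))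
      rw [hES]
      exact Matroid.eRk'_le_of_subset_closure
        (insert_subset hecl (M.subset_closure _ diff_subset))
    have hSind : M.Indep (B \ {e}) := hBcirc.diff_singleton_indep' heB
    have hScard : (B \ {e}).encard = 2 := by
      have h1 := encard_diff_singleton_add_one heB
      rw [hBcard] at h1
      exact WithTop.add_right_cancel ENat.one_ne_top
        (show (B \ {e}).encard + 1 = 2 + 1 by rw [h1]; norm_num)
    have hTwoS : M.TwoSep (B \ {e}) := by
      refine ⟨diff_subset.trans hBsub, by rw [hScard],
        le_trans hBc2 (encard_mono (diff_subset_diff_right diff_subset)), ?_⟩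
      rw [hSind.eRk'_eq, hScard, hrES, ← hrB]
      exact hBr
    rcases h3 _ hTwoS with ⟨_, hc3⟩ | ⟨_, hc3⟩
    · rw [hScard] at hc3; norm_num at hc3
    · have hdiff := encard_diff_add_encard_of_subset (show B \ {e} ⊆ M.E from diff_subset.trans hBsub)
      rw [hc3, hScard] at hdiff
      rw [← hdiff] at hcard
      norm_num at hcard
  · -- |A ∩ B| = 2
    have hPcard : (A ∩ B).encard = 2 := by rw [hk, hk12]; rfl
    have hrP : M.eRk' (A ∩ B) = 2 := by rw [hPind.eRk'_eq, hPcard]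
    have hUcard : (A ∪ B).encard = 4 := by
      have h1 := encard_union_add_encard_inter A B
      rw [hAcard, hBcard, hPcard] at h1
      exact WithTop.add_right_cancel (ENat.ofNat_ne_top 2)
        (show (A ∪ B).encard + 2 = 4 + 2 by rw [h1]; norm_num)
    have hrU : M.eRk' (A ∪ B) = 2 := by
      refine le_antisymm ?_ (by rw [← hrA]; exact Matroid.eRk'_mono' subset_union_left)
      have hsub := M.eRk'_submod A B
      rw [hrA, hrB, hrP] at hsub
      exact (WithTop.add_le_add_iff_left (by simp : (2:ℕ∞) ≠ ⊤)).1
        (by exact hsub)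
    have hUsub : A ∪ B ⊆ M.E := union_subset hAsub hBsub
    have hCfin : (M.E \ (A ∪ B)).Finite := hEfin.subset diff_subset
    have hWfin : (M.E \ (A ∩ B)).Finite := hEfin.subset diff_subset
    -- lift everything to ℕ
    obtain ⟨nE, hnE⟩ : ∃ n : ℕ, M.E.encard = (n : ℕ∞) :=
      ⟨_, (ENat.coe_toNat hEfin.encard_lt_top.ne).symm⟩
    obtain ⟨nC, hnC⟩ : ∃ n : ℕ, (M.E \ (A ∪ B)).encard = (n : ℕ∞) :=
      ⟨_, (ENat.coe_toNat hCfin.encard_lt_top.ne).symm⟩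
    obtain ⟨nW, hnW⟩ : ∃ n : ℕ, (M.E \ (A ∩ B)).encard = (n : ℕ∞) :=
      ⟨_, (ENat.coe_toNat hWfin.encard_lt_top.ne).symm⟩
    obtain ⟨rE, hrE⟩ : ∃ n : ℕ, M.eRk' M.E = (n : ℕ∞) :=
      ⟨_, (ENat.coe_toNat (M.eRk'_lt_top M.E).ne).symm⟩
    obtain ⟨rEA, hrEA⟩ : ∃ n : ℕ, M.eRk' (M.E \ A) = (n : ℕ∞) :=
      ⟨_, (ENat.coe_toNat (M.eRk'_lt_top _).ne).symm⟩
    obtain ⟨rEB, hrEB⟩ : ∃ n : ℕ, M.eRk' (M.E \ B) = (n : ℕ∞) :=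
      ⟨_, (ENat.coe_toNat (M.eRk'_lt_top _).ne).symm⟩
    obtain ⟨rC, hrC⟩ : ∃ n : ℕ, M.eRk' (M.E \ (A ∪ B)) = (n : ℕ∞) :=
      ⟨_, (ENat.coe_toNat (M.eRk'_lt_top _).ne).symm⟩
    obtain ⟨rW, hrW⟩ : ∃ n : ℕ, M.eRk' (M.E \ (A ∩ B)) = (n : ℕ∞) :=
      ⟨_, (ENat.coe_toNat (M.eRk'_lt_top _).ne).symm⟩
    have f1 : 2 + rEA = rE + 1 := by
      rw [hrA, hrEA, hrE] at hAr; exact_mod_cast hAr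
    have f2 : 2 + rEB = rE + 1 := by
      rw [hrB, hrEB, hrE] at hBr; exact_mod_cast hBr
    have f3 : rC + rW ≤ rEA + rEB := by
      have hsub2 := M.eRk'_submod (M.E \ A) (M.E \ B)
      rw [diff_inter_diff, ← diff_inter, hrC, hrW, hrEA, hrEB] at hsub2
      exact_mod_cast hsub2
    have f4 : rEA ≤ rW := by
      have h5 := Matroid.eRk'_mono' (M := M)
        (show M.E \ A ⊆ M.E \ (A ∩ B) from diff_subset_diff_right inter_subset_left)
      rw [hrEA, hrW] at h5
      exact_mod_cast h5
    have h6 : 6 ≤ nE := by rw [hnE] at hcard; exact_mod_cast hcard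
    have hCE : nC + 4 = nE := by
      have h5 := encard_diff_add_encard_of_subset hUsub
      rw [hUcard, hnC, hnE] at h5
      exact_mod_cast h5
    have hCne : (M.E \ (A ∪ B)).Nonempty := by
      rw [← one_le_encard_iff_nonempty, hnC]
      exact_mod_cast (by omega : 1 ≤ nC)
    have hUne : (A ∪ B).Nonempty := by
      rw [← one_le_encard_iff_nonempty, hUcard]; norm_num
    have f5 : rE + 1 ≤ 2 + rC := by
      have h5 := M.conn_lower hconn (A ∪ B) hUsub hUne hCne
      rw [hrU, hrC, hrE] at h5
      exact_mod_cast h5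
    have hTwoU : M.TwoSep (A ∪ B) := by
      refine ⟨hUsub, by rw [hUcard]; norm_num, ?_, ?_⟩
      · rw [hnC]; exact_mod_cast (by omega : 2 ≤ nC)
      · rw [hrU, hrC, hrE]
        exact_mod_cast (by omega : 2 + rC = rE + 1)
    rcases h3 _ hTwoU with ⟨_, hc3⟩ | ⟨hCcirc, hCc3⟩
    · rw [hUcard] at hc3; norm_num at hc3
    · have hnC3 : nC = 3 := by
        rw [hnC] at hCc3; exact_mod_cast hCc3
      have hrC2 : rC = 2 := by
        have h5 := hCcirc.eRk'_of_three hCfin hCc3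
        rw [hrC] at h5; exact_mod_cast h5
      have hWE : nW + 2 = nE := by
        have h5 := encard_diff_add_encard_of_subset
          (show A ∩ B ⊆ M.E from inter_subset_left.trans hAsub)
        rw [hPcard, hnW, hnE] at h5
        exact_mod_cast h5
      have hTwoP : M.TwoSep (A ∩ B) := by
        refine ⟨inter_subset_left.trans hAsub, by rw [hPcard], ?_, ?_⟩
        · rw [hnW]; exact_mod_cast (by omega : 2 ≤ nW)
        · rw [hrP, hrW, hrE]
          exact_mod_cast (by omega : 2 + rW = rE + 1)
      rcases h3 _ hTwoP with ⟨_, hc3'⟩ | ⟨_, hc3'⟩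
      · rw [hPcard] at hc3'; norm_num at hc3'
      · rw [hnW] at hc3'
        have h7 : nW = 3 := by exact_mod_cast hc3'
        omega
end
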